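/- arXiv:1308.4105 — 8 statements merged into one kernel-verified Lean document; each statement's English description precedes it below -/
import Mathlib

section
/- Let R be a local ring and s a central element of R. In the formal matrix ring M₂(R;s), the Jacobson radical consists exactly of the matrices [[a,b],[c,d]] with a ∈ J(R), d ∈ J(R), s·b ∈ J(R), and s·c ∈ J(R). -/
/-- The formal matrix ring `M₂(R;s)`: 2×2 matrices over `R` recorded by their four
entries, with the twisted multiplication
`[[a,b],[c,d]]·[[a',b'],[c',d']] = [[aa'+s²bc', ab'+bd'],[ca'+dc', s²cb'+dd']]`. -/
@[ext]
structure FM (R : Type*) (s : R) : Type _ where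
  a : R
  b : R
  c : R
  d : R

namespace FM

variable {R : Type*} [Ring R] {s : R}

instance : Zero (FM R s) := ⟨⟨0, 0, 0, 0⟩⟩
instance : One (FM R s) := ⟨⟨1, 0, 0, 1⟩⟩
instance : Add (FM R s) := ⟨fun x y => ⟨x.a + y.a, x.b + y.b, x.c + y.c, x.d + y.d⟩⟩
instance : Neg (FM R s) := ⟨fun x => ⟨-x.a, -x.b, -x.c, -x.d⟩⟩
instance : Mul (FM R s) :=
  ⟨fun x y => ⟨x.a * y.a + s * s * (x.b * y.c), x.a * y.b + x.b * y.d,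
    x.c * y.a + x.d * y.c, s * s * (x.c * y.b) + x.d * y.d⟩⟩

@[simp] lemma zero_a : (0 : FM R s).a = 0 := rfl
@[simp] lemma zero_b : (0 : FM R s).b = 0 := rfl
@[simp] lemma zero_c : (0 : FM R s).c = 0 := rfl
@[simp] lemma zero_d : (0 : FM R s).d = 0 := rfl
@[simp] lemma one_a : (1 : FM R s).a = 1 := rfl
@[simp] lemma one_b : (1 : FM R s).b = 0 := rfl
@[simp] lemma one_c : (1 : FM R s).c = 0 := rfl
@[simp] lemma one_d : (1 : FM R s).d = 1 := rfl
@[simp] lemma add_a (x y : FM R s) : (x + y).a = x.a + y.a := rfl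
@[simp] lemma add_b (x y : FM R s) : (x + y).b = x.b + y.b := rfl
@[simp] lemma add_c (x y : FM R s) : (x + y).c = x.c + y.c := rfl
@[simp] lemma add_d (x y : FM R s) : (x + y).d = x.d + y.d := rfl
@[simp] lemma neg_a (x : FM R s) : (-x).a = -x.a := rfl
@[simp] lemma neg_b (x : FM R s) : (-x).b = -x.b := rfl
@[simp] lemma neg_c (x : FM R s) : (-x).c = -x.c := rfl
@[simp] lemma neg_d (x : FM R s) : (-x).d = -x.d := rfl
@[simp] lemma mul_a (x y : FM R s) : (x * y).a = x.a * y.a + s * s * (x.b * y.c) := rfl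
@[simp] lemma mul_b (x y : FM R s) : (x * y).b = x.a * y.b + x.b * y.d := rfl
@[simp] lemma mul_c (x y : FM R s) : (x * y).c = x.c * y.a + x.d * y.c := rfl
@[simp] lemma mul_d (x y : FM R s) : (x * y).d = s * s * (x.c * y.b) + x.d * y.d := rfl

instance : AddCommGroup (FM R s) where
  add_assoc x y z := by ext <;> simp [add_assoc]
  zero_add x := by ext <;> simp
  add_zero x := by ext <;> simp
  add_comm x y := by ext <;> simp [add_comm]
  neg_add_cancel x := by ext <;> simp
  nsmul := nsmulRec
  zsmul := zsmulRec

/-- When `s` is central in `R`, `M₂(R;s)` is a ring. -/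
instance [hs : Fact (∀ x : R, s * x = x * s)] : Ring (FM R s) where
  __ := (inferInstance : AddCommGroup (FM R s))
  mul := (· * ·)
  one := 1
  mul_assoc x y z := by
    have hc : ∀ u v : R, u * (s * v) = s * (u * v) := fun u v => by
      rw [← mul_assoc, ← hs.out u, mul_assoc]
    ext <;> simp only [mul_a, mul_b, mul_c, mul_d, mul_add, add_mul, mul_assoc, hc] <;> abel
  one_mul x := by ext <;> simp
  mul_one x := by ext <;> simp
  left_distrib x y z := by ext <;> simp [mul_add, add_mul] <;> abel
  right_distrib x y z := by ext <;> simp [mul_add, add_mul] <;> abel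
  zero_mul x := by ext <;> simp
  mul_zero x := by ext <;> simp

/-- In a commutative ring every element is central. -/
instance (priority := 100) {R : Type*} [CommRing R] (s : R) : Fact (∀ x : R, s * x = x * s) :=
  ⟨fun x => mul_comm s x⟩

end FM

/-- An element is strongly J-clean if it is the sum of an idempotent and an element of
the Jacobson radical which commute. -/
def IsStronglyJClean {A : Type*} [Ring A] (x : A) : Prop :=
  ∃ e : A, IsIdempotentElem e ∧ x * e = e * x ∧ x - e ∈ (⊥ : Ideal A).jacobson

/-- An element is strongly clean if it is the sum of an idempotent and a unit
which commute. -/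
def IsStronglyClean {A : Type*} [Ring A] (x : A) : Prop :=
  ∃ e : A, IsIdempotentElem e ∧ x * e = e * x ∧ IsUnit (x - e)

/-- An element is strongly nil clean if it is the sum of an idempotent and a nilpotent
which commute. -/
def IsStronglyNilClean {A : Type*} [Ring A] (x : A) : Prop :=
  ∃ e : A, IsIdempotentElem e ∧ x * e = e * x ∧ IsNilpotent (x - e)


namespace Stmt5Aux

/-- Noncommutative characterization of the Jacobson radical of ⊥. -/
lemma memJbot {A : Type*} [Ring A] {x : A} :
    x ∈ (⊥ : Ideal A).jacobson ↔ ∀ y, IsUnit (y * x + 1) := by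
  constructor
  · intro h y
    obtain ⟨z, hz⟩ := Ideal.mem_jacobson_iff.1 h y
    rw [Ideal.mem_bot, sub_eq_zero] at hz
    have hz1 : z * (y * x + 1) = 1 := by rw [mul_add, mul_one, ← mul_assoc, hz]
    obtain ⟨w, hw⟩ := Ideal.mem_jacobson_iff.1 h (-(z * y))
    rw [Ideal.mem_bot, sub_eq_zero] at hw
    have hwz : w * z = 1 := by
      have hzz : z = 1 - z * y * x := by
        rw [eq_sub_iff_add_eq, add_comm]; exact hz
      calc w * z = w * (1 - z * y * x) := by rw [← hzz]
        _ = w * -(z * y) * x + w := by noncomm_ring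
        _ = 1 := hw
    have hweq : w = y * x + 1 := by
      calc w = w * (z * (y * x + 1)) := by rw [hz1, mul_one]
        _ = (w * z) * (y * x + 1) := by rw [mul_assoc]
        _ = y * x + 1 := by rw [hwz, one_mul]
    exact ⟨⟨y * x + 1, z, by rw [← hweq]; exact hwz, hz1⟩, rfl⟩
  · intro h
    refine Ideal.mem_jacobson_iff.2 fun y => ?_
    refine ⟨↑(h y).unit⁻¹, ?_⟩
    rw [Ideal.mem_bot, sub_eq_zero]
    calc (↑(h y).unit⁻¹ : A) * y * x + ↑(h y).unit⁻¹
        = ↑(h y).unit⁻¹ * (y * x + 1) := by noncomm_ring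
      _ = ↑(h y).unit⁻¹ * ↑(h y).unit := by rw [IsUnit.unit_spec]
      _ = 1 := (h y).unit.inv_mul

set_option linter.unusedSectionVars false
variable {R : Type*} [Ring R] [IsLocalRing R]

/-- In a local ring, a one-sided inverse is two-sided. -/
lemma unit_of_mul_eq_one {x y : R} (h : x * y = 1) : IsUnit x ∧ IsUnit y := by
  have he : (y * x) * (1 - y * x) = 0 := by
    have : y * x * (y * x) = y * x := by
      calc y * x * (y * x) = y * (x * y) * x := by noncomm_ring
        _ = y * x := by rw [h, mul_one]
    rw [mul_sub, mul_one, this, sub_self]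
  rcases IsLocalRing.isUnit_or_isUnit_of_add_one
    (show y * x + (1 - y * x) = 1 by rw [add_sub_cancel]) with hu | hu
  · have h1 : (1 : R) - y * x = 0 :=
      hu.mul_left_cancel (show y * x * (1 - y * x) = y * x * 0 by rw [mul_zero]; exact he)
    have hyx : y * x = 1 := by rwa [sub_eq_zero, eq_comm] at h1
    exact ⟨⟨⟨x, y, h, hyx⟩, rfl⟩, ⟨⟨y, x, hyx, h⟩, rfl⟩⟩
  · exfalso
    have hyx0 : y * x = 0 :=
      hu.mul_right_cancel (show y * x * (1 - y * x) = 0 * (1 - y * x) by rw [zero_mul]; exact he)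
    have hx0 : x = 0 := by
      calc x = x * (y * x) := by rw [← mul_assoc, h, one_mul]
        _ = 0 := by rw [hyx0, mul_zero]
    rw [hx0, zero_mul] at h
    exact zero_ne_one h

lemma memJ_of_not_isUnit {x : R} (h : ¬ IsUnit x) : x ∈ (⊥ : Ideal R).jacobson := by
  rw [memJbot]
  intro y
  rcases IsLocalRing.isUnit_or_isUnit_of_add_one
    (show (y * x + 1) + (-(y * x)) = 1 by abel) with hu | hu
  · exact hu
  · exfalso
    have h1 : IsUnit (y * x) := by simpa using hu.neg
    have h2 : (↑h1.unit⁻¹ * y) * x = 1 := by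
      rw [mul_assoc]; exact h1.val_inv_mul
    exact h ((unit_of_mul_eq_one h2).2)

lemma not_isUnit_of_memJ {x : R} (h : x ∈ (⊥ : Ideal R).jacobson) : ¬ IsUnit x := by
  intro hx
  have := memJbot.1 h (-(↑hx.unit⁻¹))
  rw [neg_mul] at this
  have h1 : (↑hx.unit⁻¹ : R) * x = 1 := hx.val_inv_mul
  rw [h1, neg_add_cancel] at this
  exact not_isUnit_zero this

lemma unit_add_one_of_memJ {x : R} (h : x ∈ (⊥ : Ideal R).jacobson) : IsUnit (x + 1) := by
  have := memJbot.1 h 1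
  rwa [one_mul] at this

lemma unit_sub_of_memJ {u j : R} (hu : IsUnit u) (hj : j ∈ (⊥ : Ideal R).jacobson) :
    IsUnit (u - j) := by
  have h1 : IsUnit (1 - ↑hu.unit⁻¹ * j) := by
    have := memJbot.1 (Ideal.mul_mem_left _ (↑hu.unit⁻¹) hj) (-1)
    rwa [neg_one_mul, neg_add_eq_sub] at this
  have h2 : u - j = u * (1 - ↑hu.unit⁻¹ * j) := by
    rw [mul_sub, mul_one, ← mul_assoc, hu.mul_val_inv, one_mul]
  rw [h2]
  exact hu.mul h1

end Stmt5Aux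

namespace Stmt5Aux

section FMlemmas

variable {R : Type*} [Ring R] {s : R} [hsf : Fact (∀ x : R, s * x = x * s)]

lemma hcc (x : R) : Commute s x := hsf.out x

lemma hsw (u v : R) : s * (u * v) = u * (s * v) := by
  rw [← mul_assoc, (hcc u).eq, mul_assoc]

lemma hsplit (u v : R) : s * s * (u * v) = (s * u) * (s * v) := by
  rw [mul_assoc, hsw u v, ← mul_assoc]

lemma hss (r x : R) : s * s * (r * x) = r * (s * s * x) := by
  rw [hsplit, (hcc r).eq, mul_assoc, ← mul_assoc s s x]

variable [IsLocalRing R]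

lemma FM_isUnit_a {U : FM R s} (h : IsUnit U) (hc : U.c = 0) : IsUnit U.a := by
  have h1 : (↑h.unit⁻¹ * U : FM R s) = 1 := h.val_inv_mul
  have h2 := congrArg FM.a h1
  simp only [FM.mul_a, hc, mul_zero, add_zero, FM.one_a] at h2
  exact (unit_of_mul_eq_one h2).2

lemma FM_isUnit_d {U : FM R s} (h : IsUnit U) (hb : U.b = 0) : IsUnit U.d := by
  have h1 : (↑h.unit⁻¹ * U : FM R s) = 1 := h.val_inv_mul
  have h2 := congrArg FM.d h1
  simp only [FM.mul_d, hb, mul_zero, zero_add, FM.one_d] at h2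
  exact (unit_of_mul_eq_one h2).2

lemma FM_isUnit_of {X : FM R s} (ha : IsUnit X.a) (hd : IsUnit X.d)
    (hb : s * X.b ∈ (⊥ : Ideal R).jacobson) (hc : s * X.c ∈ (⊥ : Ideal R).jacobson) :
    IsUnit X := by
  have hj : s * s * ((X.b * ↑hd.unit⁻¹) * X.c) ∈ (⊥ : Ideal R).jacobson := by
    rw [hsplit]
    exact Ideal.mul_mem_left _ _ hc
  have hpu : IsUnit (X.a - s * s * ((X.b * ↑hd.unit⁻¹) * X.c)) := unit_sub_of_memJ ha hj
  have h1 : X.d * ((↑hd.unit⁻¹ : R) * X.c) = X.c := by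
    rw [← mul_assoc, hd.mul_val_inv, one_mul]
  have h2 : (X.b * ↑hd.unit⁻¹) * X.d = X.b := by
    rw [mul_assoc, hd.val_inv_mul, mul_one]
  have hX : X = (⟨1, X.b * ↑hd.unit⁻¹, 0, 1⟩ : FM R s) *
      ((⟨X.a - s * s * ((X.b * ↑hd.unit⁻¹) * X.c), 0, 0, X.d⟩ : FM R s) *
        (⟨1, 0, (↑hd.unit⁻¹ : R) * X.c, 1⟩ : FM R s)) := by
    ext <;> simp [h1, h2]
  have hT1 : IsUnit (⟨1, X.b * ↑hd.unit⁻¹, 0, 1⟩ : FM R s) :=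
    ⟨⟨_, (⟨1, -(X.b * ↑hd.unit⁻¹), 0, 1⟩ : FM R s), by ext <;> simp, by ext <;> simp⟩, rfl⟩
  have hT2 : IsUnit ((⟨X.a - s * s * ((X.b * ↑hd.unit⁻¹) * X.c), 0, 0, X.d⟩ : FM R s)) :=
    ⟨⟨_, (⟨↑hpu.unit⁻¹, 0, 0, ↑hd.unit⁻¹⟩ : FM R s),
      by ext <;> simp [hpu.mul_val_inv, hd.mul_val_inv],
      by ext <;> simp [hpu.val_inv_mul, hd.val_inv_mul]⟩, rfl⟩
  have hT3 : IsUnit ((⟨1, 0, (↑hd.unit⁻¹ : R) * X.c, 1⟩ : FM R s)) :=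
    ⟨⟨_, (⟨1, 0, -((↑hd.unit⁻¹ : R) * X.c), 1⟩ : FM R s), by ext <;> simp, by ext <;> simp⟩, rfl⟩
  rw [hX]
  exact hT1.mul (hT2.mul hT3)

lemma sJ_of_ssJ {x : R} (h : s * s * x ∈ (⊥ : Ideal R).jacobson) :
    s * x ∈ (⊥ : Ideal R).jacobson := by
  have hnu : ¬ IsUnit (s * s * x) := not_isUnit_of_memJ h
  apply memJ_of_not_isUnit
  intro hsx
  apply hnu
  have h1 : s * (x * ↑hsx.unit⁻¹) = 1 := by rw [← mul_assoc]; exact hsx.mul_val_inv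
  have hsu : IsUnit s := (unit_of_mul_eq_one h1).1
  have := hsu.mul hsx
  rwa [← mul_assoc] at this

end FMlemmas

end Stmt5Aux


theorem stmt5 {R : Type*} [Ring R] [IsLocalRing R] (s : R)
    [Fact (∀ x : R, s * x = x * s)] (A : FM R s) :
    A ∈ (⊥ : Ideal (FM R s)).jacobson ↔
      A.a ∈ (⊥ : Ideal R).jacobson ∧ A.d ∈ (⊥ : Ideal R).jacobson ∧
        s * A.b ∈ (⊥ : Ideal R).jacobson ∧ s * A.c ∈ (⊥ : Ideal R).jacobson := by
  constructor
  · intro hA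
    have hcrit := Stmt5Aux.memJbot.1 hA
    refine ⟨?_, ?_, ?_, ?_⟩
    · rw [Stmt5Aux.memJbot]
      intro r
      have hu := hcrit ⟨r, 0, 0, 0⟩
      have h1 := Stmt5Aux.FM_isUnit_a hu (by simp)
      simpa using h1
    · rw [Stmt5Aux.memJbot]
      intro r
      have hu := hcrit ⟨0, 0, 0, r⟩
      have h1 := Stmt5Aux.FM_isUnit_d hu (by simp)
      simpa using h1
    · apply Stmt5Aux.sJ_of_ssJ
      rw [Stmt5Aux.memJbot]
      intro r
      have hu := hcrit ⟨0, 0, r, 0⟩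
      have h1 := Stmt5Aux.FM_isUnit_d hu (by simp)
      rw [show ((⟨0, 0, r, 0⟩ : FM R s) * A + 1).d = r * (s * s * A.b) + 1 by
        simp [Stmt5Aux.hss]] at h1
      exact h1
    · apply Stmt5Aux.sJ_of_ssJ
      rw [Stmt5Aux.memJbot]
      intro r
      have hu := hcrit ⟨0, r, 0, 0⟩
      have h1 := Stmt5Aux.FM_isUnit_a hu (by simp)
      rw [show ((⟨0, r, 0, 0⟩ : FM R s) * A + 1).a = r * (s * s * A.c) + 1 by
        simp [Stmt5Aux.hss]] at h1
      exact h1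
  · rintro ⟨ha, hd, hb, hc⟩
    rw [Stmt5Aux.memJbot]
    intro Y
    apply Stmt5Aux.FM_isUnit_of
    · rw [show (Y * A + 1).a = (Y.a * A.a + s * s * (Y.b * A.c)) + 1 by simp]
      apply Stmt5Aux.unit_add_one_of_memJ
      exact Ideal.add_mem _ (Ideal.mul_mem_left _ _ ha)
        (by rw [Stmt5Aux.hsplit]; exact Ideal.mul_mem_left _ _ hc)
    · rw [show (Y * A + 1).d = (s * s * (Y.c * A.b) + Y.d * A.d) + 1 by simp]
      apply Stmt5Aux.unit_add_one_of_memJ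
      exact Ideal.add_mem _ (by rw [Stmt5Aux.hsplit]; exact Ideal.mul_mem_left _ _ hb)
        (Ideal.mul_mem_left _ _ hd)
    · have e1 : s * (Y * A + 1).b = s * (Y.a * A.b) + s * (Y.b * A.d) := by
        simp [mul_add]
      have m1 : s * (Y.a * A.b) ∈ (⊥ : Ideal R).jacobson := by
        rw [Stmt5Aux.hsw]; exact Ideal.mul_mem_left _ _ hb
      have m2 : s * (Y.b * A.d) ∈ (⊥ : Ideal R).jacobson := by
        rw [← mul_assoc]; exact Ideal.mul_mem_left _ _ hd
      rw [e1]; exact Ideal.add_mem _ m1 m2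
    · have e1 : s * (Y * A + 1).c = s * (Y.c * A.a) + s * (Y.d * A.c) := by
        simp [mul_add]
      have m1 : s * (Y.c * A.a) ∈ (⊥ : Ideal R).jacobson := by
        rw [← mul_assoc]; exact Ideal.mul_mem_left _ _ ha
      have m2 : s * (Y.d * A.c) ∈ (⊥ : Ideal R).jacobson := by
        rw [Stmt5Aux.hsw]; exact Ideal.mul_mem_left _ _ hc
      rw [e1]; exact Ideal.add_mem _ m1 m2
end

section
/- Let R be a local ring and s a central element of R lying in J(R). Then the Jacobson radical of the formal matrix ring M₂(R;s) is the set of matrices [[a,b],[c,d]] with a, d ∈ J(R) and b, c ∈ R arbitrary; moreover, a matrix [[a,x],[y,b]] ∈ M₂(R;s) is a unit if and only if a and b are units of R. -/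
section JacobsonHelpers

variable {A : Type*} [Ring A]

/-- Left–right inverse implies unit. -/
lemma FMaux.isUnit_of_left_right {x l r : A} (hl : l * x = 1) (hr : x * r = 1) :
    IsUnit x := by
  have hlr : l = r := by rw [← mul_one l, ← hr, ← mul_assoc, hl, one_mul]
  exact ⟨⟨x, r, hr, by rw [← hlr, hl]⟩, rfl⟩

lemma FMaux.isUnit_of_unit_prods {a x y : A} (h1 : IsUnit (a * x)) (h2 : IsUnit (y * a)) :
    IsUnit a := by
  refine FMaux.isUnit_of_left_right (l := ↑h2.unit⁻¹ * y) (r := x * ↑h1.unit⁻¹) ?_ ?_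
  · rw [mul_assoc]; exact h2.val_inv_mul
  · rw [← mul_assoc]; exact h1.mul_val_inv

/-- Noncommutative characterization of the Jacobson radical of `⊥`. -/
lemma FMaux.memJbot_iff {x : A} :
    x ∈ (⊥ : Ideal A).jacobson ↔ ∀ y, IsUnit (y * x + 1) := by
  constructor
  · intro hx y
    obtain ⟨z, hz⟩ := Ideal.mem_jacobson_iff.mp hx y
    rw [Ideal.mem_bot, sub_eq_zero] at hz
    have h1 : z * (y * x + 1) = 1 := by rw [mul_add, mul_one, ← mul_assoc, hz]
    obtain ⟨w, hw⟩ := Ideal.mem_jacobson_iff.mp hx (-(z * y))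
    rw [Ideal.mem_bot, sub_eq_zero] at hw
    have hz' : -(z * y) * x + 1 = z := by
      have h := hz
      rw [← h]; noncomm_ring
    have h2 : w * z = 1 := by
      rw [← hz', mul_add, mul_one, ← mul_assoc, hw]
    have h3 : y * x + 1 = w := by
      calc y * x + 1 = w * z * (y * x + 1) := by rw [h2, one_mul]
        _ = w * (z * (y * x + 1)) := by rw [mul_assoc]
        _ = w := by rw [h1, mul_one]
    have h4 : z * w = 1 := by rw [← h3, h1]
    exact h3 ▸ FMaux.isUnit_of_left_right h4 h2
  · intro h
    refine Ideal.mem_jacobson_iff.mpr fun y => ⟨(((h y).unit⁻¹ : Aˣ) : A), ?_⟩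
    rw [Ideal.mem_bot, sub_eq_zero]
    calc (((h y).unit⁻¹ : Aˣ) : A) * y * x + (((h y).unit⁻¹ : Aˣ) : A)
        = (((h y).unit⁻¹ : Aˣ) : A) * (y * x + 1) := by noncomm_ring
      _ = 1 := (h y).val_inv_mul

lemma FMaux.isUnit_one_add {j : A} (hj : j ∈ (⊥ : Ideal A).jacobson) : IsUnit (j + 1) := by
  simpa using FMaux.memJbot_iff.mp hj 1

lemma FMaux.isUnit_one_sub {j : A} (hj : j ∈ (⊥ : Ideal A).jacobson) : IsUnit (1 - j) := by
  have := FMaux.memJbot_iff.mp hj (-1)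
  simpa [neg_add_eq_sub] using this

end JacobsonHelpers

namespace FM

variable {R : Type*} [Ring R] {s : R} [hsc : Fact (∀ x : R, s * x = x * s)]

lemma s2_mem (hsJ : s ∈ (⊥ : Ideal R).jacobson) (w : R) :
    s * s * w ∈ (⊥ : Ideal R).jacobson := by
  have h : s * s * w = (w * s) * s := by
    rw [mul_assoc, hsc.out w, ← mul_assoc, hsc.out w]
  rw [h, ← smul_eq_mul]
  exact Ideal.jacobson (⊥ : Ideal R) |>.smul_mem _ hsJ

lemma mulJ_mem {a : R} (ha : a ∈ (⊥ : Ideal R).jacobson) (w : R) :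
    w * a ∈ (⊥ : Ideal R).jacobson := by
  rw [← smul_eq_mul]; exact Ideal.jacobson (⊥ : Ideal R) |>.smul_mem _ ha

/-- A diagonal formal matrix with unit entries is a unit. -/
lemma isUnit_diag {u v : R} (hu : IsUnit u) (hv : IsUnit v) :
    IsUnit (⟨u, 0, 0, v⟩ : FM R s) := by
  refine ⟨⟨_, ⟨↑hu.unit⁻¹, 0, 0, ↑hv.unit⁻¹⟩, ?_, ?_⟩, rfl⟩ <;> ext <;>
    simp [hu.mul_val_inv, hu.val_inv_mul, hv.mul_val_inv, hv.val_inv_mul]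

/-- A diagonal unit of `M₂(R;s)`. -/
def diagU (u v : Rˣ) : (FM R s)ˣ :=
  ⟨⟨u, 0, 0, v⟩, ⟨↑u⁻¹, 0, 0, ↑v⁻¹⟩, by ext <;> simp, by ext <;> simp⟩

/-- Every `[[1,p],[q,1]]` has a right inverse of the form `[[1,-p],[-q,1]] * D`
with `D` a diagonal unit, provided `s ∈ J(R)`. -/
lemma step1 (hsJ : s ∈ (⊥ : Ideal R).jacobson) (p q : R) :
    ∃ X : FM R s, (⟨1, p, q, 1⟩ : FM R s) * X = 1 ∧
      ∃ D : (FM R s)ˣ, X = (⟨1, -p, -q, 1⟩ : FM R s) * D := by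
  have hu : IsUnit (1 - s * s * (p * q)) := FMaux.isUnit_one_sub (s2_mem hsJ _)
  have hv : IsUnit (1 - s * s * (q * p)) := FMaux.isUnit_one_sub (s2_mem hsJ _)
  set u := hu.unit
  set v := hv.unit
  have hus : (u : R) = 1 - s * s * (p * q) := hu.unit_spec
  have hvs : (v : R) = 1 - s * s * (q * p) := hv.unit_spec
  refine ⟨⟨↑u⁻¹, -(p * ↑v⁻¹), -(q * ↑u⁻¹), ↑v⁻¹⟩, ?_, diagU u⁻¹ v⁻¹, ?_⟩
  · ext
    · show (1 : R) * ↑u⁻¹ + s * s * (p * -(q * ↑u⁻¹)) = 1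
      calc (1 : R) * ↑u⁻¹ + s * s * (p * -(q * ↑u⁻¹))
          = (1 - s * s * (p * q)) * ↑u⁻¹ := by noncomm_ring
        _ = ↑u * ↑u⁻¹ := by rw [hus]
        _ = 1 := u.mul_inv
    · show (1 : R) * -(p * ↑v⁻¹) + p * ↑v⁻¹ = 0
      noncomm_ring
    · show q * ↑u⁻¹ + (1 : R) * -(q * ↑u⁻¹) = 0
      noncomm_ring
    · show s * s * (q * -(p * ↑v⁻¹)) + (1 : R) * ↑v⁻¹ = 1
      calc s * s * (q * -(p * ↑v⁻¹)) + (1 : R) * ↑v⁻¹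
          = (1 - s * s * (q * p)) * ↑v⁻¹ := by noncomm_ring
        _ = ↑v * ↑v⁻¹ := by rw [hvs]
        _ = 1 := v.mul_inv
  · ext <;> simp [diagU]

/-- If `s ∈ J(R)` then `[[1,p],[q,1]]` is a unit. -/
lemma isUnit_one_off (hsJ : s ∈ (⊥ : Ideal R).jacobson) (p q : R) :
    IsUnit (⟨1, p, q, 1⟩ : FM R s) := by
  obtain ⟨X, hMX, D, hXD⟩ := step1 hsJ p q
  obtain ⟨X₂, hX₂, -⟩ := step1 hsJ (-p) (-q)
  have hXr : X * (↑D⁻¹ * X₂) = 1 := by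
    rw [hXD, mul_assoc, ← mul_assoc (D : FM R s), Units.mul_inv, one_mul]
    simpa using hX₂
  have hXunit : IsUnit X := FMaux.isUnit_of_left_right hMX hXr
  have : (⟨1, p, q, 1⟩ : FM R s) = ↑hXunit.unit⁻¹ := by
    rw [← mul_one (⟨1, p, q, 1⟩ : FM R s), ← hXunit.mul_val_inv, ← mul_assoc, hMX, one_mul]
  rw [this]
  exact Units.isUnit _

/-- Characterization of units of `M₂(R;s)` for `s ∈ J(R)`. -/
lemma isUnit_iff (hsJ : s ∈ (⊥ : Ideal R).jacobson) (A : FM R s) :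
    IsUnit A ↔ IsUnit A.a ∧ IsUnit A.d := by
  constructor
  · rintro ⟨U, rfl⟩
    have h1 : (U : FM R s) * ↑U⁻¹ = 1 := U.mul_inv
    have h2 : (↑U⁻¹ : FM R s) * U = 1 := U.inv_mul
    have e1 : (U : FM R s).a * (↑U⁻¹ : FM R s).a
        + s * s * ((U : FM R s).b * (↑U⁻¹ : FM R s).c) = 1 := by
      rw [← mul_a, h1, one_a]
    have e2 : (↑U⁻¹ : FM R s).a * (U : FM R s).a
        + s * s * ((↑U⁻¹ : FM R s).b * (U : FM R s).c) = 1 := by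
      rw [← mul_a, h2, one_a]
    have e3 : s * s * ((U : FM R s).c * (↑U⁻¹ : FM R s).b)
        + (U : FM R s).d * (↑U⁻¹ : FM R s).d = 1 := by
      rw [← mul_d, h1, one_d]
    have e4 : s * s * ((↑U⁻¹ : FM R s).c * (U : FM R s).b)
        + (↑U⁻¹ : FM R s).d * (U : FM R s).d = 1 := by
      rw [← mul_d, h2, one_d]
    constructor
    · refine FMaux.isUnit_of_unit_prods (x := (↑U⁻¹ : FM R s).a) (y := (↑U⁻¹ : FM R s).a) ?_ ?_
      · have : (U : FM R s).a * (↑U⁻¹ : FM R s).a = 1 - s * s * ((U : FM R s).b * (↑U⁻¹ : FM R s).c) := by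
          rw [← e1]; noncomm_ring
        rw [this]; exact FMaux.isUnit_one_sub (s2_mem hsJ _)
      · have : (↑U⁻¹ : FM R s).a * (U : FM R s).a = 1 - s * s * ((↑U⁻¹ : FM R s).b * (U : FM R s).c) := by
          rw [← e2]; noncomm_ring
        rw [this]; exact FMaux.isUnit_one_sub (s2_mem hsJ _)
    · refine FMaux.isUnit_of_unit_prods (x := (↑U⁻¹ : FM R s).d) (y := (↑U⁻¹ : FM R s).d) ?_ ?_
      · have : (U : FM R s).d * (↑U⁻¹ : FM R s).d = 1 - s * s * ((U : FM R s).c * (↑U⁻¹ : FM R s).b) := by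
          rw [← e3]; noncomm_ring
        rw [this]; exact FMaux.isUnit_one_sub (s2_mem hsJ _)
      · have : (↑U⁻¹ : FM R s).d * (U : FM R s).d = 1 - s * s * ((↑U⁻¹ : FM R s).c * (U : FM R s).b) := by
          rw [← e4]; noncomm_ring
        rw [this]; exact FMaux.isUnit_one_sub (s2_mem hsJ _)
  · rintro ⟨ha, hd⟩
    have key : A = (⟨A.a, 0, 0, A.d⟩ : FM R s) * ⟨1, ↑ha.unit⁻¹ * A.b, ↑hd.unit⁻¹ * A.c, 1⟩ := by
      ext <;> simp
      · rw [← mul_assoc, ha.mul_val_inv, one_mul]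
      · rw [← mul_assoc, hd.mul_val_inv, one_mul]
    rw [key]
    exact (isUnit_diag ha hd).mul (isUnit_one_off hsJ _ _)

end FM

theorem stmt6 {R : Type*} [Ring R] [IsLocalRing R] (s : R)
    [Fact (∀ x : R, s * x = x * s)] (hsJ : s ∈ (⊥ : Ideal R).jacobson) :
    (∀ A : FM R s, A ∈ (⊥ : Ideal (FM R s)).jacobson ↔
      A.a ∈ (⊥ : Ideal R).jacobson ∧ A.d ∈ (⊥ : Ideal R).jacobson) ∧
    (∀ A : FM R s, IsUnit A ↔ IsUnit A.a ∧ IsUnit A.d) := by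
  have hunit := fun A : FM R s => FM.isUnit_iff hsJ A
  refine ⟨fun A => ?_, hunit⟩
  constructor
  · intro hA
    constructor
    · refine FMaux.memJbot_iff.mpr fun y => ?_
      have := FMaux.memJbot_iff.mp hA (⟨y, 0, 0, 0⟩ : FM R s)
      rw [hunit] at this
      simpa using this.1
    · refine FMaux.memJbot_iff.mpr fun y => ?_
      have := FMaux.memJbot_iff.mp hA (⟨0, 0, 0, y⟩ : FM R s)
      rw [hunit] at this
      simpa using this.2
  · rintro ⟨ha, hd⟩
    refine FMaux.memJbot_iff.mpr fun Y => ?_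
    rw [hunit]
    constructor
    · show IsUnit (Y.a * A.a + s * s * (Y.b * A.c) + 1)
      exact FMaux.isUnit_one_add (Ideal.add_mem _ (FM.mulJ_mem ha _) (FM.s2_mem hsJ _))
    · show IsUnit (s * s * (Y.c * A.b) + Y.d * A.d + 1)
      exact FMaux.isUnit_one_add (Ideal.add_mem _ (FM.s2_mem hsJ _) (FM.mulJ_mem hd _))
end

section
/- Let R be a local ring and s a central element in J(R). Every strongly nil clean element of the formal matrix ring M₂(R;s) is strongly J-clean. -/
section Aux

variable {A : Type*} [Ring A]

/-- In any nontrivial ring, an element of the Jacobson radical is a nonunit. -/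
theorem not_isUnit_of_mem_jacobson_bot [Nontrivial A] {x : A}
    (h : x ∈ (⊥ : Ideal A).jacobson) (hu : IsUnit x) : False := by
  obtain ⟨M, hM⟩ := Ideal.exists_maximal A
  have hxM : x ∈ M := Ideal.mem_sInf.mp h ⟨bot_le, hM⟩
  exact hM.ne_top (M.eq_top_of_isUnit_mem hxM hu)

/-- Quasi-regularity criterion for membership in the Jacobson radical. -/
theorem mem_jacobson_bot_of_forall_isUnit {x : A}
    (h : ∀ y : A, IsUnit (y * x + 1)) : x ∈ (⊥ : Ideal A).jacobson := by
  rw [Ideal.mem_jacobson_iff]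
  intro y
  obtain ⟨v, hv⟩ := h y
  refine ⟨(↑v⁻¹ : A), ?_⟩
  have : (↑v⁻¹ : A) * y * x + ↑v⁻¹ - 1 = ↑v⁻¹ * (y * x + 1) - 1 := by noncomm_ring
  rw [Submodule.mem_bot, this, ← hv, Units.inv_mul, sub_self]

variable [IsLocalRing A]

/-- In a local ring, if `r * a` is a unit then `a` is a unit. -/
theorem local_isUnit_of_mul {r a : A} (h : IsUnit (r * a)) : IsUnit a := by
  obtain ⟨v, hv⟩ := h
  have hba : (↑v⁻¹ * r) * a = 1 := by
    rw [mul_assoc, ← hv, Units.inv_mul]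
  set b := (↑v⁻¹ : A) * r with hb
  have he : (a * b) * (a * b) = a * b := by
    rw [mul_assoc, ← mul_assoc b, hba, one_mul]
  rcases IsLocalRing.isUnit_or_isUnit_of_add_one
      (show a * b + (1 - a * b) = 1 by noncomm_ring) with h1 | h1
  · -- a*b is a unit idempotent, hence = 1
    have h0 : (a * b) * (1 - a * b) = (a * b) * 0 := by
      rw [mul_sub, mul_one, he, sub_self, mul_zero]
    have h2 : (1 : A) - a * b = 0 := h1.mul_left_cancel h0
    have hab : a * b = 1 := (sub_eq_zero.mp h2).symm
    exact ⟨⟨a, b, hab, hba⟩, rfl⟩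
  · exfalso
    have h0 : (1 - a * b) * a = (1 - a * b) * 0 := by
      rw [sub_mul, one_mul, mul_assoc, hba, mul_one, sub_self, mul_zero]
    have ha0 : a = 0 := h1.mul_left_cancel h0
    rw [ha0, mul_zero] at hba
    exact one_ne_zero hba.symm

theorem local_not_isUnit_mul {r a : A} (h : ¬IsUnit a) : ¬IsUnit (r * a) :=
  fun hu => h (local_isUnit_of_mul hu)

omit [IsLocalRing A] in
theorem local_not_isUnit_of_pow {a : A} {k : ℕ} (_hk : k ≠ 0)
    (h : ¬IsUnit (a ^ k)) : ¬IsUnit a := fun hu => h (hu.pow k)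

theorem local_or_of_isUnit_add {a b : A} (h : IsUnit (a + b)) :
    IsUnit a ∨ IsUnit b := by
  obtain ⟨u, hu⟩ := h
  have h1 : ↑u⁻¹ * a + ↑u⁻¹ * b = 1 := by rw [← mul_add, ← hu, Units.inv_mul]
  have key : ∀ c : A, IsUnit ((↑u⁻¹ : A) * c) → IsUnit c := by
    intro c hc
    have : c = ↑u * (↑u⁻¹ * c) := by rw [← mul_assoc, Units.mul_inv, one_mul]
    rw [this]
    exact u.isUnit.mul hc
  rcases IsLocalRing.isUnit_or_isUnit_of_add_one h1 with h2 | h2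
  · exact Or.inl (key a h2)
  · exact Or.inr (key b h2)

theorem local_not_isUnit_add {a b : A} (ha : ¬IsUnit a) (hb : ¬IsUnit b) :
    ¬IsUnit (a + b) := by
  intro h
  rcases local_or_of_isUnit_add h with h' | h'
  · exact ha h'
  · exact hb h'

theorem local_isUnit_one_add {a : A} (ha : ¬IsUnit a) : IsUnit (a + 1) := by
  rcases IsLocalRing.isUnit_or_isUnit_of_add_one (show -a + (a + 1) = 1 by rw [← add_assoc, neg_add_cancel, zero_add]) with h | h
  · exact absurd ((IsUnit.neg_iff a).mp h) ha
  · exact h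

theorem local_isUnit_one_sub {a : A} (ha : ¬IsUnit a) : IsUnit (1 - a) := by
  rw [show (1 : A) - a = -a + 1 by noncomm_ring]
  exact local_isUnit_one_add (fun h => ha ((IsUnit.neg_iff a).mp h))

end Aux

namespace FM

variable {R : Type*} [Ring R] {s : R} [hs : Fact (∀ x : R, s * x = x * s)] [IsLocalRing R]

theorem not_isUnit_ssq (hsu : ¬IsUnit s) (t : R) : ¬IsUnit (s * s * t) := by
  have : s * s * t = (s * t) * s := by
    rw [mul_assoc, hs.out (s * t)]
  rw [this]
  exact local_not_isUnit_mul hsu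

/-- The lower-triangular unit `[[1,0],[l,1]]`. -/
theorem isUnit_lower (l : R) : IsUnit (⟨1, 0, l, 1⟩ : FM R s) := by
  refine ⟨⟨⟨1, 0, l, 1⟩, ⟨1, 0, -l, 1⟩, ?_, ?_⟩, rfl⟩ <;> ext <;> simp

/-- The upper-triangular unit `[[1,u],[0,1]]`. -/
theorem isUnit_upper (u : R) : IsUnit (⟨1, u, 0, 1⟩ : FM R s) := by
  refine ⟨⟨⟨1, u, 0, 1⟩, ⟨1, -u, 0, 1⟩, ?_, ?_⟩, rfl⟩ <;> ext <;> simp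

theorem isUnit_diag_s9 {p q : R} (hp : IsUnit p) (hq : IsUnit q) :
    IsUnit (⟨p, 0, 0, q⟩ : FM R s) := by
  obtain ⟨P, hP⟩ := hp
  obtain ⟨Q, hQ⟩ := hq
  refine ⟨⟨⟨p, 0, 0, q⟩, ⟨↑P⁻¹, 0, 0, ↑Q⁻¹⟩, ?_, ?_⟩, rfl⟩ <;> ext <;>
    simp [← hP, ← hQ]

/-- A formal matrix with unit diagonal entries is a unit (when `s` is a nonunit). -/
theorem isUnit_of_diag (hsu : ¬IsUnit s) (M : FM R s)
    (ha : IsUnit M.a) (hd : IsUnit M.d) : IsUnit M := by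
  obtain ⟨α, hα⟩ := ha
  set l : R := M.c * ↑α⁻¹ with hl
  set u : R := ↑α⁻¹ * M.b with hu
  set w : R := s * s * (l * (M.a * u)) with hw
  have hwn : ¬IsUnit w := not_isUnit_ssq hsu _
  obtain ⟨δ, hδ⟩ := hd
  have hq : IsUnit (M.d - w) := by
    have h1 : IsUnit (1 - ↑δ⁻¹ * w) :=
      local_isUnit_one_sub (local_not_isUnit_mul hwn)
    have : M.d - w = ↑δ * (1 - ↑δ⁻¹ * w) := by
      rw [mul_sub, mul_one, ← mul_assoc, Units.mul_inv, one_mul, hδ]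
    rw [this]
    exact δ.isUnit.mul h1
  have key : M = (⟨1, 0, l, 1⟩ : FM R s) * ⟨M.a, 0, 0, M.d - w⟩ * ⟨1, u, 0, 1⟩ := by
    ext <;> simp [hl, hu, hw] <;> rw [← hα]
    · rw [Units.mul_inv_cancel_left]
    · rw [Units.inv_mul_cancel_right]
    · rw [mul_assoc (M.c * ↑α⁻¹), add_sub_cancel]
  rw [key]
  exact ((isUnit_lower l).mul (isUnit_diag_s9 (hα ▸ α.isUnit) hq)).mul (isUnit_upper u)

end FM

namespace FM

variable {R : Type*} [Ring R] {s : R} [hs : Fact (∀ x : R, s * x = x * s)] [IsLocalRing R]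

theorem pow_entries (hsu : ¬IsUnit s) (n : FM R s) (m : ℕ) :
    ∃ ja jd : R, ¬IsUnit ja ∧ ¬IsUnit jd ∧
      (n ^ (m + 1)).a = n.a ^ (m + 1) + ja ∧ (n ^ (m + 1)).d = n.d ^ (m + 1) + jd := by
  induction m with
  | zero =>
    exact ⟨0, 0, not_isUnit_zero, not_isUnit_zero, by simp, by simp⟩
  | succ m ih =>
    obtain ⟨ja, jd, hja, hjd, hea, hed⟩ := ih
    refine ⟨n.a * ja + s * s * (n.b * (n ^ (m + 1)).c),
      s * s * (n.c * (n ^ (m + 1)).b) + n.d * jd, ?_, ?_, ?_, ?_⟩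
    · exact local_not_isUnit_add (local_not_isUnit_mul hja) (not_isUnit_ssq hsu _)
    · exact local_not_isUnit_add (not_isUnit_ssq hsu _) (local_not_isUnit_mul hjd)
    · rw [pow_succ' n (m + 1), mul_a, hea, mul_add, ← pow_succ']
      abel
    · rw [pow_succ' n (m + 1), mul_d, hed, mul_add, ← pow_succ']
      abel

theorem entries_nonunit (hsu : ¬IsUnit s) {n : FM R s} {k : ℕ}
    (hk : n ^ k = 0) (hk0 : k ≠ 0) : ¬IsUnit n.a ∧ ¬IsUnit n.d := by
  obtain ⟨m, rfl⟩ := Nat.exists_eq_succ_of_ne_zero hk0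
  obtain ⟨ja, jd, hja, hjd, hea, hed⟩ := pow_entries hsu n m
  rw [hk] at hea hed
  have h1 : n.a ^ (m + 1) = -ja := by
    rw [eq_neg_iff_add_eq_zero, ← hea, zero_a]
  have h2 : n.d ^ (m + 1) = -jd := by
    rw [eq_neg_iff_add_eq_zero, ← hed, zero_d]
  constructor
  · refine local_not_isUnit_of_pow (Nat.succ_ne_zero m) ?_
    rw [h1]
    exact fun h => hja ((IsUnit.neg_iff ja).mp h)
  · refine local_not_isUnit_of_pow (Nat.succ_ne_zero m) ?_
    rw [h2]
    exact fun h => hjd ((IsUnit.neg_iff jd).mp h)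

end FM


theorem stmt9 {R : Type*} [Ring R] [IsLocalRing R] (s : R)
    [Fact (∀ x : R, s * x = x * s)] (hsJ : s ∈ (⊥ : Ideal R).jacobson)
    (A : FM R s) (h : IsStronglyNilClean A) : IsStronglyJClean A := by
  obtain ⟨e, he, hcm, k, hk⟩ := h
  refine ⟨e, he, hcm, ?_⟩
  have hsu : ¬IsUnit s := fun hu => not_isUnit_of_mem_jacobson_bot hsJ hu
  have hk0 : k ≠ 0 := by
    rintro rfl
    rw [pow_zero] at hk
    exact one_ne_zero (congrArg FM.a hk)
  obtain ⟨hna, hnd⟩ := FM.entries_nonunit hsu hk hk0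
  apply mem_jacobson_bot_of_forall_isUnit
  intro y
  apply FM.isUnit_of_diag hsu
  · rw [FM.add_a, FM.one_a, FM.mul_a]
    exact local_isUnit_one_add
      (local_not_isUnit_add (local_not_isUnit_mul hna) (FM.not_isUnit_ssq hsu _))
  · rw [FM.add_d, FM.one_d, FM.mul_d]
    exact local_isUnit_one_add
      (local_not_isUnit_add (FM.not_isUnit_ssq hsu _) (local_not_isUnit_mul hnd))
end

section
/- Let R be a local ring with central unit s. Every non-trivial idempotent E of the formal matrix ring M₂(R;s) is similar (conjugate by a unit of M₂(R;s)) to the diagonal matrix [[1,0],[0,0]]. -/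
section LocalAux

variable {R : Type*} [Ring R] [IsLocalRing R]

lemma myUnitOr (a : R) : IsUnit a ∨ IsUnit (1 - a) :=
  IsLocalRing.isUnit_or_isUnit_of_add_one (by abel)

lemma myIdem {e : R} (he : e * e = e) : e = 0 ∨ e = 1 := by
  rcases myUnitOr e with h | h
  · right
    exact h.mul_left_cancel (by rw [he, mul_one])
  · left
    refine h.mul_right_cancel ?_
    rw [zero_mul, mul_sub, mul_one, he, sub_self]

lemma myUnitOfRightInv {x z : R} (h : x * z = 1) : IsUnit x := by
  have hzx : (z * x) * (z * x) = z * x := by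
    rw [mul_assoc, ← mul_assoc x z x, h, one_mul]
  rcases myIdem hzx with h0 | h1
  · exfalso
    have hz : z = 0 := by
      calc z = z * (x * z) := by rw [h, mul_one]
        _ = (z * x) * z := by rw [mul_assoc]
        _ = 0 := by rw [h0, zero_mul]
    rw [hz, mul_zero] at h
    exact zero_ne_one h
  · exact ⟨⟨x, z, h, h1⟩, rfl⟩

lemma myUnitLeft {x y : R} (h : IsUnit (x * y)) : IsUnit x := by
  obtain ⟨u, hu⟩ := h
  exact myUnitOfRightInv (z := y * (↑u⁻¹ : R))
    (by rw [← mul_assoc, ← hu, Units.mul_inv])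

lemma myUnitRight {x y : R} (h : IsUnit (x * y)) : IsUnit y := by
  obtain ⟨u, hu⟩ := h
  have h1 : ((↑u⁻¹ : R) * x) * y = 1 := by rw [mul_assoc, ← hu, Units.inv_mul]
  obtain ⟨w, hw⟩ := myUnitOfRightInv h1
  have hy : y = (↑w⁻¹ : R) := by
    calc y = 1 * y := (one_mul y).symm
      _ = ((↑w⁻¹ : R) * ↑w) * y := by rw [Units.inv_mul]
      _ = (↑w⁻¹ : R) * (↑w * y) := by rw [mul_assoc]
      _ = (↑w⁻¹ : R) := by rw [hw, h1, mul_one]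
  exact hy ▸ (w⁻¹).isUnit

lemma myNonunitAdd {x y : R} (hx : ¬IsUnit x) (hy : ¬IsUnit y) : ¬IsUnit (x + y) := by
  intro h
  obtain ⟨u, hu⟩ := h
  have h1 : (↑u⁻¹ : R) * x + (↑u⁻¹ : R) * y = 1 := by
    rw [← mul_add, ← hu, Units.inv_mul]
  rcases IsLocalRing.isUnit_or_isUnit_of_add_one h1 with h' | h'
  · exact hx (myUnitRight h')
  · exact hy (myUnitRight h')

end LocalAux

section ConjAux

variable {A : Type*} [Monoid A]

lemma conjComp (u v : Aˣ) {x y z : A}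
    (h1 : ((u⁻¹ : Aˣ) : A) * x * u = y) (h2 : ((v⁻¹ : Aˣ) : A) * y * v = z) :
    (((u * v)⁻¹ : Aˣ) : A) * x * ((u * v : Aˣ) : A) = z := by
  subst h1; subst h2
  simp [mul_assoc]

lemma conjIdem (u : Aˣ) {x : A} (h : x * x = x) :
    (((u⁻¹ : Aˣ) : A) * x * u) * (((u⁻¹ : Aˣ) : A) * x * u) = ((u⁻¹ : Aˣ) : A) * x * u := by
  simp only [mul_assoc, Units.mul_inv_cancel_left]
  rw [← mul_assoc x x, h]

lemma conjEqOne (u : Aˣ) {x : A} (h : ((u⁻¹ : Aˣ) : A) * x * u = 1) : x = 1 := by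
  have := congrArg (fun z => (u : A) * z * ((u⁻¹ : Aˣ) : A)) h
  simpa [mul_assoc] using this

end ConjAux
section CaseA

variable {R : Type*} [Ring R] [IsLocalRing R] {s : R} [Fact (∀ x : R, s * x = x * s)]

lemma caseA {a b c d : R} (ha : IsUnit a)
    (hI : FM.mk (R := R) (s := s) a b c d * FM.mk a b c d = FM.mk a b c d)
    (hne : FM.mk (R := R) (s := s) a b c d ≠ 1) :
    ∃ u : (FM R s)ˣ,
      ((u⁻¹ : (FM R s)ˣ) : FM R s) * FM.mk a b c d * (u : FM R s) = FM.mk 1 0 0 0 := by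
  obtain ⟨ua, hua⟩ := ha
  set p : R := (↑ua⁻¹ : R) with hp
  have hp1 : p * a = 1 := by rw [hp, ← hua, Units.inv_mul]
  have hp2 : a * p = 1 := by rw [hp, ← hua, Units.mul_inv]
  have e1 : a * a + s * s * (b * c) = a := congrArg FM.a hI
  have e3 : c * a + d * c = c := congrArg FM.c hI
  -- the first conjugating unit
  have hu1a : FM.mk (R := R) (s := s) a 0 c 1 * FM.mk p 0 (-(c * p)) 1 = 1 := by
    ext <;> simp [hp2, mul_assoc]
  have hu1b : FM.mk (R := R) (s := s) p 0 (-(c * p)) 1 * FM.mk a 0 c 1 = 1 := by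
    ext <;> simp [hp1, mul_assoc]
  set u1 : (FM R s)ˣ := ⟨FM.mk a 0 c 1, FM.mk p 0 (-(c * p)) 1, hu1a, hu1b⟩ with hu1
  set β : R := p * b with hβ
  set δ : R := d - s * s * (c * (p * b)) with hδ
  have hEU : FM.mk (R := R) (s := s) a b c d * FM.mk a 0 c 1 = FM.mk a b c d := by
    ext <;> simp [e1, e3]
  have step1 : ((u1⁻¹ : (FM R s)ˣ) : FM R s) * FM.mk a b c d * (u1 : FM R s)
      = FM.mk 1 β 0 δ := by
    show FM.mk p 0 (-(c * p)) 1 * FM.mk a b c d * FM.mk a 0 c 1 = FM.mk 1 β 0 δ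
    rw [mul_assoc, hEU]
    ext <;> simp [hβ, hδ, hp1, mul_assoc, sub_eq_add_neg, add_comm]
  have hF : FM.mk (R := R) (s := s) 1 β 0 δ * FM.mk 1 β 0 δ = FM.mk 1 β 0 δ := by
    rw [← step1]; exact conjIdem u1 hI
  have hβδ : β * δ = 0 := by
    have := congrArg FM.b hF
    simpa using this
  have hδδ : δ * δ = δ := by
    have := congrArg FM.d hF
    simpa using this
  rcases myIdem hδδ with h0 | h1
  · -- δ = 0 : finish with an upper triangular unit
    rw [h0] at step1
    have hu2a : FM.mk (R := R) (s := s) 1 (-β) 0 1 * FM.mk 1 β 0 1 = 1 := by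
      ext <;> simp
    have hu2b : FM.mk (R := R) (s := s) 1 β 0 1 * FM.mk 1 (-β) 0 1 = 1 := by
      ext <;> simp
    set u2 : (FM R s)ˣ := ⟨FM.mk 1 (-β) 0 1, FM.mk 1 β 0 1, hu2a, hu2b⟩ with hu2
    have step2 : ((u2⁻¹ : (FM R s)ˣ) : FM R s) * FM.mk 1 β 0 0 * (u2 : FM R s)
        = FM.mk 1 0 0 0 := by
      show FM.mk (R := R) (s := s) 1 β 0 1 * FM.mk 1 β 0 0 * FM.mk 1 (-β) 0 1 = FM.mk 1 0 0 0
      ext <;> simp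
    exact ⟨u1 * u2, conjComp u1 u2 step1 step2⟩
  · -- δ = 1 : contradiction with E ≠ 1
    exfalso
    rw [h1, mul_one] at hβδ
    rw [h1, hβδ] at step1
    have : FM.mk (R := R) (s := s) 1 0 0 1 = 1 := rfl
    rw [this] at step1
    exact hne (conjEqOne u1 step1)

end CaseA
theorem stmt10 {R : Type*} [Ring R] [IsLocalRing R] (s : R)
    [Fact (∀ x : R, s * x = x * s)] (hs : IsUnit s)
    (E : FM R s) (hE : IsIdempotentElem E) (h0 : E ≠ 0) (h1 : E ≠ 1) :
    ∃ u : (FM R s)ˣ, ((u⁻¹ : (FM R s)ˣ) : FM R s) * E * (u : FM R s) = FM.mk 1 0 0 0 := by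
  have hcen : ∀ x : R, s * x = x * s := Fact.out
  obtain ⟨a, b, c, d⟩ := E
  have hI : FM.mk (R := R) (s := s) a b c d * FM.mk a b c d = FM.mk a b c d := hE
  have e1 : a * a + s * s * (b * c) = a := congrArg FM.a hI
  have e2 : a * b + b * d = b := congrArg FM.b hI
  have e3 : c * a + d * c = c := congrArg FM.c hI
  have e4 : s * s * (c * b) + d * d = d := congrArg FM.d hI
  by_cases ha : IsUnit a
  · exact caseA ha hI h1
  by_cases hd : IsUnit d
  · -- swap via S = [[0,1],[1,0]], then apply caseA to [[d,c],[b,a]]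
    obtain ⟨us, hus⟩ := hs
    set v : R := (↑(us * us)⁻¹ : R) with hv
    have hv1 : s * s * v = 1 := by
      rw [hv, ← hus, ← Units.val_mul, Units.mul_inv]
    have hv2 : v * (s * s) = 1 := by
      rw [hv, ← hus, ← Units.val_mul, Units.inv_mul]
    have hSa : FM.mk (R := R) (s := s) 0 1 1 0 * FM.mk 0 v v 0 = 1 := by
      ext <;> simp [hv1]
    have hSb : FM.mk (R := R) (s := s) 0 v v 0 * FM.mk 0 1 1 0 = 1 := by
      ext <;> simp [hv1]
    set uS : (FM R s)ˣ := ⟨FM.mk 0 1 1 0, FM.mk 0 v v 0, hSa, hSb⟩ with huS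
    have stepS : ((uS⁻¹ : (FM R s)ˣ) : FM R s) * FM.mk a b c d * (uS : FM R s)
        = FM.mk d c b a := by
      show FM.mk (R := R) (s := s) 0 v v 0 * FM.mk a b c d * FM.mk 0 1 1 0 = FM.mk d c b a
      ext <;> simp [← mul_assoc, hv2, hv1]
    have hI' : FM.mk (R := R) (s := s) d c b a * FM.mk d c b a = FM.mk d c b a := by
      rw [← stepS]; exact conjIdem uS hI
    have hne' : FM.mk (R := R) (s := s) d c b a ≠ 1 := by
      intro h
      exact h1 (conjEqOne uS (by rw [stepS, h]))
    obtain ⟨u', hu'⟩ := caseA hd hI' hne'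
    exact ⟨uS * u', conjComp uS u' stepS hu'⟩
  · -- neither a nor d a unit : contradiction with E ≠ 0
    exfalso
    have hq : IsUnit (1 - d) := (myUnitOr d).resolve_left hd
    obtain ⟨uq, huq⟩ := hq
    set q : R := (↑uq⁻¹ : R) with hqdef
    have hq1 : (1 - d) * q = 1 := by rw [hqdef, ← huq, Units.mul_inv]
    have hq2 : q * (1 - d) = 1 := by rw [hqdef, ← huq, Units.inv_mul]
    have hq1' : ∀ x : R, (1 - d) * (q * x) = x := fun x => by
      rw [← mul_assoc, hq1, one_mul]
    have hq2' : ∀ x : R, q * ((1 - d) * x) = x := fun x => by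
      rw [← mul_assoc, hq2, one_mul]
    have hqd : q * d = q - 1 := by
      have h := hq2
      rw [mul_sub, mul_one, sub_eq_iff_eq_add] at h
      exact eq_sub_of_add_eq' h.symm
    have hb2 : b * (1 - d) = a * b := by
      rw [mul_sub, mul_one, eq_sub_of_add_eq e2]
    have hb3 : b = a * (b * q) := by
      calc b = b * ((1 - d) * q) := by rw [hq1, mul_one]
        _ = (b * (1 - d)) * q := by rw [mul_assoc]
        _ = (a * b) * q := by rw [hb2]
        _ = a * (b * q) := by rw [mul_assoc]
    have tcomm : ∀ x : R, s * s * x = x * (s * s) := fun x => by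
      rw [mul_assoc, hcen x, ← mul_assoc, hcen x, mul_assoc]
    set w : R := s * s * (b * (q * c)) with hw
    have hwfac : a * (s * s * ((b * q) * (q * c))) = w := by
      rw [← mul_assoc, ← tcomm a, mul_assoc (s * s) a, ← mul_assoc a (b * q), ← hb3, hw]
    have hwnu : ¬IsUnit w := by
      intro hu
      rw [← hwfac] at hu
      exact ha (myUnitLeft hu)
    have hα : IsUnit (1 - a - w) := by
      rw [sub_sub]
      exact (myUnitOr (a + w)).resolve_left (myNonunitAdd ha hwnu)
    obtain ⟨uα, huα⟩ := hα
    -- build P, D, Q units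
    have hPa : FM.mk (R := R) (s := s) 1 (-(b * q)) 0 1 * FM.mk 1 (b * q) 0 1 = 1 := by
      ext <;> simp
    have hPb : FM.mk (R := R) (s := s) 1 (b * q) 0 1 * FM.mk 1 (-(b * q)) 0 1 = 1 := by
      ext <;> simp
    have hDa : FM.mk (R := R) (s := s) (1 - a - w) 0 0 (1 - d)
        * FM.mk (↑uα⁻¹ : R) 0 0 q = 1 := by
      ext <;> simp [hq1, ← huα, Units.mul_inv]
    have hDb : FM.mk (R := R) (s := s) (↑uα⁻¹ : R) 0 0 q
        * FM.mk (1 - a - w) 0 0 (1 - d) = 1 := by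
      ext <;> simp [hq2, ← huα, Units.inv_mul]
    have hQa : FM.mk (R := R) (s := s) 1 0 (-(q * c)) 1 * FM.mk 1 0 (q * c) 1 = 1 := by
      ext <;> simp
    have hQb : FM.mk (R := R) (s := s) 1 0 (q * c) 1 * FM.mk 1 0 (-(q * c)) 1 = 1 := by
      ext <;> simp
    set P : (FM R s)ˣ := ⟨_, _, hPa, hPb⟩ with hP
    set D : (FM R s)ˣ := ⟨_, _, hDa, hDb⟩ with hD
    set Q : (FM R s)ˣ := ⟨_, _, hQa, hQb⟩ with hQ
    have hval : ((P * D * Q : (FM R s)ˣ) : FM R s) = 1 - FM.mk a b c d := by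
      show FM.mk (R := R) (s := s) 1 (-(b * q)) 0 1 * FM.mk (1 - a - w) 0 0 (1 - d)
          * FM.mk 1 0 (-(q * c)) 1 = 1 - FM.mk a b c d
      have h1E : (1 : FM R s) - FM.mk a b c d = FM.mk (1 - a) (-b) (-c) (1 - d) := by
        ext <;> simp [sub_eq_add_neg]
      rw [h1E]
      ext <;> simp [mul_assoc, hq1', hq2', hqd, hw, mul_sub, sub_mul] <;> abel
    have hunit : IsUnit ((1 : FM R s) - FM.mk a b c d) := ⟨P * D * Q, hval⟩
    obtain ⟨vE, hvE⟩ := hunit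
    have hz : FM.mk (R := R) (s := s) a b c d * ((1 : FM R s) - FM.mk a b c d) = 0 := by
      rw [mul_sub, mul_one, hI, sub_self]
    have : FM.mk (R := R) (s := s) a b c d = 0 := by
      calc FM.mk (R := R) (s := s) a b c d
          = FM.mk a b c d * ((↑vE : FM R s) * (↑vE⁻¹ : FM R s)) := by
            rw [Units.mul_inv, mul_one]
        _ = (FM.mk a b c d * (↑vE : FM R s)) * (↑vE⁻¹ : FM R s) := by rw [mul_assoc]
        _ = 0 := by rw [hvE, hz, zero_mul]
    exact h0 this
end

section
/- Let R be a local ring and s a central unit of R. A matrix A ∈ M₂(R;s) is strongly J-clean if and only if A ∈ J(M₂(R;s)), or I₂ - A ∈ J(M₂(R;s)), or A is similar to a diagonal matrix diag(v, w) with v ∈ 1 + J(R) and w ∈ J(R). -/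
section JacAux

variable {L : Type*} [Ring L]

lemma aux_isUnit_of_isUnit_mul_left {u m : L} (hu : IsUnit u) (h : IsUnit (u * m)) : IsUnit m := by
  have h1 : m = ↑hu.unit⁻¹ * (u * m) := by
    rw [← mul_assoc, IsUnit.val_inv_mul, one_mul]
  rw [h1]
  exact (hu.unit⁻¹).isUnit.mul h

lemma aux_mem_jac_of_units {x : L} (h : ∀ y : L, IsUnit (1 + y * x)) :
    x ∈ (⊥ : Ideal L).jacobson := by
  rw [Ideal.mem_jacobson_iff]
  intro y
  obtain ⟨u, hu⟩ := h y
  refine ⟨↑u⁻¹, ?_⟩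
  have h2 : (↑u⁻¹ : L) * (1 + y * x) = 1 := by rw [← hu]; exact u.inv_mul
  have h3 : (↑u⁻¹ : L) * y * x + ↑u⁻¹ - 1 = (↑u⁻¹ : L) * (1 + y * x) - 1 := by noncomm_ring
  rw [h2, sub_self] at h3
  rw [Ideal.mem_bot]
  exact h3

lemma aux_isUnit_one_add {x : L} (hx : x ∈ (⊥ : Ideal L).jacobson) (y : L) :
    IsUnit (1 + y * x) := by
  have key : ∀ y : L, ∃ w : L, w * (1 + y * x) = 1 := by
    intro y
    obtain ⟨z, hz⟩ := Ideal.mem_jacobson_iff.mp hx y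
    rw [Ideal.mem_bot] at hz
    refine ⟨z, ?_⟩
    have h1 : z * (1 + y * x) - 1 = z * y * x + z - 1 := by noncomm_ring
    rw [hz] at h1
    exact sub_eq_zero.mp h1
  obtain ⟨w, hw⟩ := key y
  have hw' : w = 1 + (-(w * y)) * x := by
    have h3 : w * (1 + y * x) = w + w * y * x := by noncomm_ring
    rw [h3] at hw
    have h4 : w = 1 - w * y * x := eq_sub_of_add_eq hw
    have h5 : 1 + (-(w * y)) * x = 1 - w * y * x := by noncomm_ring
    rw [h5]; exact h4
  obtain ⟨v, hv⟩ := key (-(w * y))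
  rw [← hw'] at hv
  have hveq : v = 1 + y * x := by
    calc v = v * (w * (1 + y * x)) := by rw [hw, mul_one]
    _ = v * w * (1 + y * x) := by rw [mul_assoc]
    _ = 1 + y * x := by rw [hv, one_mul]
  exact ⟨⟨1 + y * x, w, by rw [← hveq]; exact hv, hw⟩, rfl⟩

lemma aux_isUnit_one_add' {x : L} (hx : x ∈ (⊥ : Ideal L).jacobson) : IsUnit (1 + x) := by
  simpa using aux_isUnit_one_add hx 1

lemma aux_isUnit_one_sub {x : L} (hx : x ∈ (⊥ : Ideal L).jacobson) : IsUnit (1 - x) := by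
  have h := aux_isUnit_one_add hx (-1)
  simpa [sub_eq_add_neg, neg_one_mul] using h

lemma aux_jac_mul_right {x : L} (hx : x ∈ (⊥ : Ideal L).jacobson) (y : L) :
    x * y ∈ (⊥ : Ideal L).jacobson := by
  exact Ideal.mul_mem_right y _ hx

lemma aux_jac_conj {x : L} (hx : x ∈ (⊥ : Ideal L).jacobson) (u : Lˣ) :
    ↑u * x * ↑u⁻¹ ∈ (⊥ : Ideal L).jacobson := by
  have h1 := aux_jac_mul_right hx (↑u⁻¹ : L)
  have h2 := Ideal.mul_mem_left _ (↑u : L) h1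
  rwa [← mul_assoc] at h2

lemma aux_idem_jac_eq_zero {e : L} (he : e * e = e) (hj : e ∈ (⊥ : Ideal L).jacobson) :
    e = 0 := by
  obtain ⟨u, hu⟩ := aux_isUnit_one_sub hj
  have h1 : e * (1 - e) = 0 := by rw [mul_sub, mul_one, he, sub_self]
  calc e = e * ((1 - e) * ↑u⁻¹) := by rw [← hu, u.mul_inv, mul_one]
  _ = e * (1 - e) * ↑u⁻¹ := by rw [mul_assoc]
  _ = 0 := by rw [h1, zero_mul]

lemma aux_conj_idem {e : L} (he : e * e = e) (u : Lˣ) :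
    (↑u * e * ↑u⁻¹) * (↑u * e * ↑u⁻¹) = ↑u * e * ↑u⁻¹ := by
  have he' : ∀ z : L, e * (e * z) = e * z := fun z => by rw [← mul_assoc, he]
  simp [mul_assoc, he']

lemma aux_conj_mul (u : Lˣ) (X Y : L) :
    (↑u * X * ↑u⁻¹) * (↑u * Y * ↑u⁻¹) = ↑u * (X * Y) * ↑u⁻¹ := by
  simp [mul_assoc]

lemma aux_conj_mul' (u : Lˣ) (X Y : L) :
    (↑u⁻¹ * X * ↑u) * (↑u⁻¹ * Y * ↑u) = ↑u⁻¹ * (X * Y) * ↑u := by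
  simp [mul_assoc]

lemma aux_conj_cancel {L : Type*} [Ring L] (u : Lˣ) (x : L) :
    ↑u⁻¹ * (↑u * x * ↑u⁻¹) * ↑u = x := by
  simp [mul_assoc]

end JacAux

section LocalAux

variable {R : Type*} [Ring R] [IsLocalRing R]

lemma aux_isUnit_of_left_inverse {x z : R} (h : z * x = 1) : IsUnit x := by
  rcases IsLocalRing.isUnit_or_isUnit_of_add_one (a := x * z) (b := 1 - x * z) (by abel)
    with h1 | h2
  · obtain ⟨u, hu⟩ := h1
    have hid : (x * z) * (x * z) = x * z := by rw [mul_assoc, ← mul_assoc z, h, one_mul]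
    have h3 : (x * z) * ↑u⁻¹ = 1 := by rw [← hu, u.mul_inv]
    have hxz : x * z = 1 := by
      calc x * z = (x * z) * ((x * z) * ↑u⁻¹) := by rw [h3, mul_one]
      _ = ((x * z) * (x * z)) * ↑u⁻¹ := (mul_assoc _ _ _).symm
      _ = (x * z) * ↑u⁻¹ := by rw [hid]
      _ = 1 := h3
    exact ⟨⟨x, z, hxz, h⟩, rfl⟩
  · obtain ⟨u, hu⟩ := h2
    have h0 : (1 - x * z) * x = 0 := by rw [sub_mul, one_mul, mul_assoc, h, mul_one, sub_self]
    have hx0 : x = 0 := by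
      calc x = (↑u⁻¹ * (1 - x * z)) * x := by rw [← hu, u.inv_mul, one_mul]
      _ = ↑u⁻¹ * ((1 - x * z) * x) := mul_assoc _ _ _
      _ = 0 := by rw [h0, mul_zero]
    rw [hx0, mul_zero] at h
    exact absurd h zero_ne_one

lemma aux_mem_jac_of_not_isUnit {x : R} (h : ¬ IsUnit x) : x ∈ (⊥ : Ideal R).jacobson := by
  apply aux_mem_jac_of_units
  intro y
  have h1 : ¬ IsUnit (y * x) := by
    intro hyx
    refine h (aux_isUnit_of_left_inverse (z := ↑hyx.unit⁻¹ * y) ?_)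
    rw [mul_assoc]
    exact hyx.val_inv_mul
  rcases IsLocalRing.isUnit_or_isUnit_of_add_one (a := 1 + y * x) (b := -(y * x)) (by abel)
    with h2 | h3
  · exact h2
  · exact absurd ((IsUnit.neg_iff _).mp h3) h1

lemma aux_not_isUnit_of_mem_jac {x : R} (h : x ∈ (⊥ : Ideal R).jacobson) : ¬ IsUnit x := by
  intro hx
  have h1 : (1 : R) ∈ (⊥ : Ideal R).jacobson := by
    have h2 := aux_jac_mul_right h (↑hx.unit⁻¹ : R)
    rwa [hx.mul_val_inv] at h2
  have h2 : ((⊥ : Ideal R).jacobson) = ⊤ := Ideal.eq_top_of_isUnit_mem _ h1 isUnit_one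
  rw [Ideal.jacobson_eq_top_iff] at h2
  have h3 : (1 : R) ∈ (⊥ : Ideal R) := h2.symm ▸ Submodule.mem_top
  rw [Ideal.mem_bot] at h3
  exact one_ne_zero h3

end LocalAux

section FMAux

set_option linter.unusedSectionVars false

namespace FM

variable {R : Type*} [Ring R] {s : R} [Fact (∀ x : R, s * x = x * s)]

@[simp] lemma a_mk (a b c d : R) : (FM.mk a b c d : FM R s).a = a := rfl
@[simp] lemma b_mk (a b c d : R) : (FM.mk a b c d : FM R s).b = b := rfl
@[simp] lemma c_mk (a b c d : R) : (FM.mk a b c d : FM R s).c = c := rfl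
@[simp] lemma d_mk (a b c d : R) : (FM.mk a b c d : FM R s).d = d := rfl

@[simp] lemma sub_a (x y : FM R s) : (x - y).a = x.a - y.a := by
  rw [sub_eq_add_neg x.a y.a, sub_eq_add_neg x y]; rfl
@[simp] lemma sub_b (x y : FM R s) : (x - y).b = x.b - y.b := by
  rw [sub_eq_add_neg x.b y.b, sub_eq_add_neg x y]; rfl
@[simp] lemma sub_c (x y : FM R s) : (x - y).c = x.c - y.c := by
  rw [sub_eq_add_neg x.c y.c, sub_eq_add_neg x y]; rfl
@[simp] lemma sub_d (x y : FM R s) : (x - y).d = x.d - y.d := by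
  rw [sub_eq_add_neg x.d y.d, sub_eq_add_neg x y]; rfl

/-- The lower unitriangular unit. -/
def lowerU (t : R) : (FM R s)ˣ where
  val := FM.mk 1 0 t 1
  inv := FM.mk 1 0 (-t) 1
  val_inv := by ext <;> simp
  inv_val := by ext <;> simp

@[simp] lemma lowerU_val (t : R) : ((lowerU t : (FM R s)ˣ) : FM R s) = FM.mk 1 0 t 1 := rfl
@[simp] lemma lowerU_inv (t : R) :
    (((lowerU t : (FM R s)ˣ)⁻¹ : (FM R s)ˣ) : FM R s) = FM.mk 1 0 (-t) 1 := rfl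

/-- The upper unitriangular unit. -/
def upperU (t : R) : (FM R s)ˣ where
  val := FM.mk 1 t 0 1
  inv := FM.mk 1 (-t) 0 1
  val_inv := by ext <;> simp
  inv_val := by ext <;> simp

@[simp] lemma upperU_val (t : R) : ((upperU t : (FM R s)ˣ) : FM R s) = FM.mk 1 t 0 1 := rfl
@[simp] lemma upperU_inv (t : R) :
    (((upperU t : (FM R s)ˣ)⁻¹ : (FM R s)ˣ) : FM R s) = FM.mk 1 (-t) 0 1 := rfl

/-- The "swap" unit, exchanging the two diagonal positions. -/
noncomputable def swapU (hs : IsUnit s) : (FM R s)ˣ where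
  val := FM.mk 0 1 (↑hs.unit⁻¹ * ↑hs.unit⁻¹) 0
  inv := FM.mk 0 1 (↑hs.unit⁻¹ * ↑hs.unit⁻¹) 0
  val_inv := by
    ext <;> simp
    · rw [mul_assoc s s _, ← mul_assoc s (↑hs.unit⁻¹ : R) _, hs.mul_val_inv, one_mul,
        hs.mul_val_inv]
    · rw [mul_assoc s s _, ← mul_assoc s (↑hs.unit⁻¹ : R) _, hs.mul_val_inv, one_mul,
        hs.mul_val_inv]
  inv_val := by
    ext <;> simp
    · rw [mul_assoc s s _, ← mul_assoc s (↑hs.unit⁻¹ : R) _, hs.mul_val_inv, one_mul,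
        hs.mul_val_inv]
    · rw [mul_assoc s s _, ← mul_assoc s (↑hs.unit⁻¹ : R) _, hs.mul_val_inv, one_mul,
        hs.mul_val_inv]

lemma swapU_val (hs : IsUnit s) :
    ((swapU hs : (FM R s)ˣ) : FM R s)
      = FM.mk 0 1 ((↑hs.unit⁻¹ : R) * (↑hs.unit⁻¹ : R)) 0 := rfl
lemma swapU_inv (hs : IsUnit s) :
    (((swapU hs)⁻¹ : (FM R s)ˣ) : FM R s)
      = FM.mk 0 1 ((↑hs.unit⁻¹ : R) * (↑hs.unit⁻¹ : R)) 0 := rfl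

/-- An upper triangular matrix with unit diagonal is a unit. -/
lemma isUnit_upper_s12 {p q b : R} (hp : IsUnit p) (hq : IsUnit q) :
    IsUnit (FM.mk p b 0 q : FM R s) := by
  obtain ⟨p', hp1, hp2⟩ : ∃ p', p * p' = 1 ∧ p' * p = 1 :=
    ⟨↑hp.unit⁻¹, hp.mul_val_inv, hp.val_inv_mul⟩
  obtain ⟨q', hq1, hq2⟩ : ∃ q', q * q' = 1 ∧ q' * q = 1 :=
    ⟨↑hq.unit⁻¹, hq.mul_val_inv, hq.val_inv_mul⟩
  refine ⟨⟨FM.mk p b 0 q, FM.mk p' (-(p' * (b * q'))) 0 q', ?_, ?_⟩, rfl⟩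
  · ext <;> simp [hp1, hq1]
    rw [← mul_assoc p p' (b * q'), hp1, one_mul, neg_add_cancel]
  · ext <;> simp [hp2, hq2]
    rw [mul_assoc p' (b * q') q, mul_assoc b q' q, hq2, mul_one, add_neg_cancel]

/-- If an upper triangular matrix with `1` in the lower corner is a unit, so is its
upper corner. -/
lemma isUnit_a_of_upper {p b : R} (h : IsUnit (FM.mk p b 0 1 : FM R s)) : IsUnit p := by
  obtain ⟨u, hu⟩ := h
  have h1 : (FM.mk p b 0 1 : FM R s) * ↑u⁻¹ = 1 := by rw [← hu]; exact u.mul_inv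
  have h2 : (↑u⁻¹ : FM R s) * FM.mk p b 0 1 = 1 := by rw [← hu]; exact u.inv_mul
  have hc : (↑u⁻¹ : FM R s).c = 0 := by simpa using congrArg FM.c h1
  have hpV : p * (↑u⁻¹ : FM R s).a = 1 := by
    have h3 := congrArg FM.a h1
    simpa [hc] using h3
  have hVp : (↑u⁻¹ : FM R s).a * p = 1 := by simpa using congrArg FM.a h2
  exact ⟨⟨p, (↑u⁻¹ : FM R s).a, hpV, hVp⟩, rfl⟩

lemma isUnit_d_of_lower {q c : R} (h : IsUnit (FM.mk 1 0 c q : FM R s)) : IsUnit q := by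
  obtain ⟨u, hu⟩ := h
  have h1 : (FM.mk 1 0 c q : FM R s) * ↑u⁻¹ = 1 := by rw [← hu]; exact u.mul_inv
  have h2 : (↑u⁻¹ : FM R s) * FM.mk 1 0 c q = 1 := by rw [← hu]; exact u.inv_mul
  have hb : (↑u⁻¹ : FM R s).b = 0 := by simpa using congrArg FM.b h1
  have hqV : q * (↑u⁻¹ : FM R s).d = 1 := by
    have h3 := congrArg FM.d h1
    simpa [hb] using h3
  have hVq : (↑u⁻¹ : FM R s).d * q = 1 := by simpa using congrArg FM.d h2
  exact ⟨⟨q, (↑u⁻¹ : FM R s).d, hqV, hVq⟩, rfl⟩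

lemma lower_conj (t : R) (F : FM R s) :
    (↑(lowerU t : (FM R s)ˣ) : FM R s) * F * (↑((lowerU t : (FM R s)ˣ)⁻¹) : FM R s)
      = FM.mk (F.a + s * s * (F.b * -t)) F.b
          (t * F.a + F.c + (s * s * (t * F.b) + F.d) * -t)
          (s * s * (t * F.b) + F.d) := by
  ext
  · show (1 * F.a + s * s * (0 * F.c)) * 1 + s * s * ((1 * F.b + 0 * F.d) * -t)
        = F.a + s * s * (F.b * -t)
    simp only [one_mul, mul_one, zero_mul, mul_zero, add_zero, zero_add]
  · show (1 * F.a + s * s * (0 * F.c)) * 0 + (1 * F.b + 0 * F.d) * 1 = F.b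
    simp only [one_mul, mul_one, zero_mul, mul_zero, add_zero, zero_add]
  · show (t * F.a + 1 * F.c) * 1 + (s * s * (t * F.b) + 1 * F.d) * -t
        = t * F.a + F.c + (s * s * (t * F.b) + F.d) * -t
    simp only [one_mul, mul_one, zero_mul, mul_zero, add_zero, zero_add]
  · show s * s * ((t * F.a + 1 * F.c) * 0) + (s * s * (t * F.b) + 1 * F.d) * 1
        = s * s * (t * F.b) + F.d
    simp only [one_mul, mul_one, zero_mul, mul_zero, add_zero, zero_add]

lemma upper_conj (t : R) (G : FM R s) :
    (↑(upperU t : (FM R s)ˣ) : FM R s) * G * (↑((upperU t : (FM R s)ˣ)⁻¹) : FM R s)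
      = FM.mk (G.a + s * s * (t * G.c)) ((G.a + s * s * (t * G.c)) * -t + (G.b + t * G.d))
          G.c (s * s * (G.c * -t) + G.d) := by
  ext
  · show (1 * G.a + s * s * (t * G.c)) * 1 + s * s * ((1 * G.b + t * G.d) * 0)
        = G.a + s * s * (t * G.c)
    simp only [one_mul, mul_one, zero_mul, mul_zero, add_zero, zero_add]
  · show (1 * G.a + s * s * (t * G.c)) * -t + (1 * G.b + t * G.d) * 1
        = (G.a + s * s * (t * G.c)) * -t + (G.b + t * G.d)
    simp only [one_mul, mul_one, zero_mul, mul_zero, add_zero, zero_add]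
  · show (0 * G.a + 1 * G.c) * 1 + (s * s * (0 * G.b) + 1 * G.d) * 0 = G.c
    simp only [one_mul, mul_one, zero_mul, mul_zero, add_zero, zero_add]
  · show s * s * ((0 * G.a + 1 * G.c) * -t) + (s * s * (0 * G.b) + 1 * G.d) * 1
        = s * s * (G.c * -t) + G.d
    simp only [one_mul, mul_one, zero_mul, mul_zero, add_zero, zero_add]

end FM

end FMAux

section FMAux2

set_option linter.unusedSectionVars false

lemma aux_add_eq_self {M : Type*} [AddGroup M] {a b : M} (h : a + b = a) : b = 0 :=
  add_left_cancel (h.trans (add_zero a).symm)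

namespace FM

variable {R : Type*} [Ring R] {s : R} [Fact (∀ x : R, s * x = x * s)]

lemma isUnit_one_add_of_entries {z : FM R s}
    (ha : z.a ∈ (⊥ : Ideal R).jacobson) (_hb : z.b ∈ (⊥ : Ideal R).jacobson)
    (hc : z.c ∈ (⊥ : Ideal R).jacobson) (hd : z.d ∈ (⊥ : Ideal R).jacobson) :
    IsUnit ((1 : FM R s) + z) := by
  have hp : IsUnit (1 + z.a) := aux_isUnit_one_add' ha
  obtain ⟨p', hp1, hp2⟩ : ∃ p', (1 + z.a) * p' = 1 ∧ p' * (1 + z.a) = 1 :=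
    ⟨↑hp.unit⁻¹, hp.mul_val_inv, hp.val_inv_mul⟩
  have hqmem : z.d + s * s * (-(z.c * p') * z.b) ∈ (⊥ : Ideal R).jacobson := by
    refine Ideal.add_mem _ hd (Ideal.mul_mem_left _ _ ?_)
    have h1 : z.c * (p' * z.b) ∈ (⊥ : Ideal R).jacobson := aux_jac_mul_right hc _
    have h3 : -(z.c * p') * z.b = -(z.c * (p' * z.b)) := by noncomm_ring
    rw [h3]
    exact neg_mem h1
  have hq : IsUnit (s * s * (-(z.c * p') * z.b) + (1 + z.d)) := by
    have h4 : s * s * (-(z.c * p') * z.b) + (1 + z.d)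
        = 1 + (z.d + s * s * (-(z.c * p') * z.b)) := by noncomm_ring
    rw [h4]; exact aux_isUnit_one_add' hqmem
  have hz : (1 : FM R s) + z = FM.mk (1 + z.a) z.b z.c (1 + z.d) := by
    ext <;> simp
  have hLM : ((lowerU (-(z.c * p')) : (FM R s)ˣ) : FM R s) * ((1 : FM R s) + z)
      = FM.mk (1 + z.a) z.b 0 (s * s * (-(z.c * p') * z.b) + (1 + z.d)) := by
    rw [hz]
    ext
    · show 1 * (1 + z.a) + s * s * (0 * z.c) = 1 + z.a
      simp only [one_mul, mul_one, zero_mul, mul_zero, add_zero, zero_add]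
    · show 1 * z.b + 0 * (1 + z.d) = z.b
      simp only [one_mul, mul_one, zero_mul, mul_zero, add_zero, zero_add]
    · show -(z.c * p') * (1 + z.a) + 1 * z.c = 0
      rw [one_mul, neg_mul, mul_assoc, hp2, mul_one, neg_add_cancel]
    · show s * s * (-(z.c * p') * z.b) + 1 * (1 + z.d)
          = s * s * (-(z.c * p') * z.b) + (1 + z.d)
      rw [one_mul]
  exact aux_isUnit_of_isUnit_mul_left (lowerU (-(z.c * p'))).isUnit
    (by rw [hLM]; exact isUnit_upper_s12 hp hq)

lemma mem_jac_of_entries {x : FM R s}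
    (ha : x.a ∈ (⊥ : Ideal R).jacobson) (hb : x.b ∈ (⊥ : Ideal R).jacobson)
    (hc : x.c ∈ (⊥ : Ideal R).jacobson) (hd : x.d ∈ (⊥ : Ideal R).jacobson) :
    x ∈ (⊥ : Ideal (FM R s)).jacobson := by
  apply aux_mem_jac_of_units
  intro Y
  refine isUnit_one_add_of_entries ?_ ?_ ?_ ?_
  · rw [mul_a]
    exact Ideal.add_mem _ (Ideal.mul_mem_left _ _ ha)
      (Ideal.mul_mem_left _ _ (Ideal.mul_mem_left _ _ hc))
  · rw [mul_b]
    exact Ideal.add_mem _ (Ideal.mul_mem_left _ _ hb) (Ideal.mul_mem_left _ _ hd)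
  · rw [mul_c]
    exact Ideal.add_mem _ (Ideal.mul_mem_left _ _ ha) (Ideal.mul_mem_left _ _ hc)
  · rw [mul_d]
    exact Ideal.add_mem _ (Ideal.mul_mem_left _ _ (Ideal.mul_mem_left _ _ hb))
      (Ideal.mul_mem_left _ _ hd)

lemma a_mem_of_mem_jac {x : FM R s} (hx : x ∈ (⊥ : Ideal (FM R s)).jacobson) :
    x.a ∈ (⊥ : Ideal R).jacobson := by
  apply aux_mem_jac_of_units
  intro y
  have h := aux_isUnit_one_add hx (FM.mk y 0 0 0)
  have heq : (1 : FM R s) + (FM.mk y 0 0 0) * x = FM.mk (1 + y * x.a) (y * x.b) 0 1 := by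
    ext <;> simp
  rw [heq] at h
  exact isUnit_a_of_upper h

lemma d_mem_of_mem_jac {x : FM R s} (hx : x ∈ (⊥ : Ideal (FM R s)).jacobson) :
    x.d ∈ (⊥ : Ideal R).jacobson := by
  apply aux_mem_jac_of_units
  intro y
  have h := aux_isUnit_one_add hx (FM.mk 0 0 0 y)
  have heq : (1 : FM R s) + (FM.mk 0 0 0 y) * x = FM.mk 1 0 (y * x.c) (1 + y * x.d) := by
    ext <;> simp
  rw [heq] at h
  exact isUnit_d_of_lower h

variable [IsLocalRing R]

lemma idem_a_one {F : FM R s} (hs : IsUnit s) (hF : F * F = F) (hFa : F.a = 1)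
    (hF1 : F ≠ 1) :
    ∃ U : (FM R s)ˣ, ↑U * F * (↑(U⁻¹) : FM R s) = (FM.mk 1 0 0 0 : FM R s) := by
  have r1 : F.a * F.a + s * s * (F.b * F.c) = F.a := congrArg FM.a hF
  have r2 : F.a * F.b + F.b * F.d = F.b := congrArg FM.b hF
  have r3 : F.c * F.a + F.d * F.c = F.c := congrArg FM.c hF
  have r4 : s * s * (F.c * F.b) + F.d * F.d = F.d := congrArg FM.d hF
  rw [hFa, one_mul] at r1
  rw [hFa, one_mul] at r2
  rw [hFa, mul_one] at r3
  have hBC0 : s * s * (F.b * F.c) = 0 := aux_add_eq_self r1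
  have cancel : ∀ x : R, s * x = 0 → x = 0 := by
    intro x hx
    have h := congrArg (fun z => (↑hs.unit⁻¹ : R) * z) hx
    simpa [← mul_assoc, hs.val_inv_mul] using h
  have hBC : F.b * F.c = 0 := by
    apply cancel; apply cancel
    rw [← mul_assoc]
    exact hBC0
  have hBD : F.b * F.d = 0 := aux_add_eq_self r2
  have hDC : F.d * F.c = 0 := aux_add_eq_self r3
  by_cases hD : IsUnit F.d
  · exfalso
    apply hF1
    obtain ⟨d', hd1, hd2⟩ : ∃ d', F.d * d' = 1 ∧ d' * F.d = 1 :=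
      ⟨↑hD.unit⁻¹, hD.mul_val_inv, hD.val_inv_mul⟩
    have hC0 : F.c = 0 := by
      calc F.c = (d' * F.d) * F.c := by rw [hd2, one_mul]
      _ = d' * (F.d * F.c) := mul_assoc _ _ _
      _ = 0 := by rw [hDC, mul_zero]
    have hB0 : F.b = 0 := by
      calc F.b = F.b * (F.d * d') := by rw [hd1, mul_one]
      _ = (F.b * F.d) * d' := (mul_assoc _ _ _).symm
      _ = 0 := by rw [hBD, zero_mul]
    have hDD : F.d * F.d = F.d := by
      rw [hC0, zero_mul, mul_zero, zero_add] at r4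
      exact r4
    have hD1 : F.d = 1 := by
      calc F.d = (d' * F.d) * F.d := by rw [hd2, one_mul]
      _ = d' * (F.d * F.d) := mul_assoc _ _ _
      _ = d' * F.d := by rw [hDD]
      _ = 1 := hd2
    ext
    · rw [hFa]; rfl
    · rw [hB0]; rfl
    · rw [hC0]; rfl
    · rw [hD1]; rfl
  · have hDJ : F.d ∈ (⊥ : Ideal R).jacobson := aux_mem_jac_of_not_isUnit hD
    have h5 : F.d * F.d = F.d - s * s * (F.c * F.b) := eq_sub_of_add_eq' r4
    have hG : (↑(lowerU (-F.c) : (FM R s)ˣ) : FM R s) * F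
          * (↑((lowerU (-F.c) : (FM R s)ˣ)⁻¹) : FM R s)
        = FM.mk 1 F.b 0 (F.d * F.d) := by
      rw [lower_conj]
      ext
      · show F.a + s * s * (F.b * -(-F.c)) = 1
        rw [neg_neg, hBC, mul_zero, add_zero, hFa]
      · rfl
      · show -F.c * F.a + F.c + (s * s * (-F.c * F.b) + F.d) * -(-F.c) = 0
        rw [hFa, mul_one, neg_add_cancel, zero_add, neg_neg, add_mul, hDC, add_zero,
          mul_assoc (s * s), mul_assoc (-F.c), hBC, mul_zero, mul_zero]
      · show s * s * (-F.c * F.b) + F.d = F.d * F.d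
        rw [h5]
        noncomm_ring
    have hGidem : (FM.mk 1 F.b 0 (F.d * F.d) : FM R s) * FM.mk 1 F.b 0 (F.d * F.d)
        = FM.mk 1 F.b 0 (F.d * F.d) := by
      rw [← hG]
      exact aux_conj_idem hF _
    have hD2 : (F.d * F.d) * (F.d * F.d) = F.d * F.d := by
      have h6 := congrArg FM.d hGidem
      simpa using h6
    have hD20 : F.d * F.d = 0 :=
      aux_idem_jac_eq_zero hD2 (aux_jac_mul_right hDJ F.d)
    rw [hD20] at hG
    have hfin : (↑(upperU F.b : (FM R s)ˣ) : FM R s) * FM.mk 1 F.b 0 0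
          * (↑((upperU F.b : (FM R s)ˣ)⁻¹) : FM R s)
        = FM.mk 1 0 0 0 := by
      rw [upper_conj]
      ext <;> simp
    refine ⟨upperU F.b * lowerU (-F.c), ?_⟩
    rw [mul_inv_rev, Units.val_mul, Units.val_mul]
    calc ((↑(upperU F.b : (FM R s)ˣ) : FM R s) * ↑(lowerU (-F.c) : (FM R s)ˣ)) * F
          * ((↑((lowerU (-F.c) : (FM R s)ˣ)⁻¹) : FM R s) * ↑((upperU F.b : (FM R s)ˣ)⁻¹))
        = (↑(upperU F.b : (FM R s)ˣ) : FM R s)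
          * ((↑(lowerU (-F.c) : (FM R s)ˣ) : FM R s) * F
            * (↑((lowerU (-F.c) : (FM R s)ˣ)⁻¹) : FM R s))
          * (↑((upperU F.b : (FM R s)ˣ)⁻¹) : FM R s) := by simp [mul_assoc]
    _ = FM.mk 1 0 0 0 := by rw [hG]; exact hfin

lemma idem_aunit {E : FM R s} (hs : IsUnit s) (hE : E * E = E) (ha : IsUnit E.a)
    (hE1 : E ≠ 1) :
    ∃ U : (FM R s)ˣ, ↑U * E * (↑(U⁻¹) : FM R s) = (FM.mk 1 0 0 0 : FM R s) := by
  obtain ⟨a', ha1, ha2⟩ : ∃ a', E.a * a' = 1 ∧ a' * E.a = 1 :=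
    ⟨↑ha.unit⁻¹, ha.mul_val_inv, ha.val_inv_mul⟩
  have hFidem : ((↑(lowerU (-(E.c * a')) : (FM R s)ˣ) : FM R s) * E
        * (↑((lowerU (-(E.c * a')) : (FM R s)ˣ)⁻¹) : FM R s))
      * ((↑(lowerU (-(E.c * a')) : (FM R s)ˣ) : FM R s) * E
        * (↑((lowerU (-(E.c * a')) : (FM R s)ˣ)⁻¹) : FM R s))
      = (↑(lowerU (-(E.c * a')) : (FM R s)ˣ) : FM R s) * E
        * (↑((lowerU (-(E.c * a')) : (FM R s)ˣ)⁻¹) : FM R s) := aux_conj_idem hE _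
  have hFa : ((↑(lowerU (-(E.c * a')) : (FM R s)ˣ) : FM R s) * E
      * (↑((lowerU (-(E.c * a')) : (FM R s)ˣ)⁻¹) : FM R s)).a = 1 := by
    rw [lower_conj]
    show E.a + s * s * (E.b * -(-(E.c * a'))) = 1
    have r1 : E.a * E.a + s * s * (E.b * E.c) = E.a := congrArg FM.a hE
    have h2 : s * s * (E.b * (E.c * a')) = (E.a - E.a * E.a) * a' := by
      have h3 : s * s * (E.b * (E.c * a')) = (s * s * (E.b * E.c)) * a' := by noncomm_ring
      rw [h3, eq_sub_of_add_eq' r1]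
    have h4 : (E.a - E.a * E.a) * a' = 1 - E.a := by
      rw [sub_mul, mul_assoc, ha1, mul_one]
    rw [neg_neg, h2, h4]
    noncomm_ring
  have hF1 : ((↑(lowerU (-(E.c * a')) : (FM R s)ˣ) : FM R s) * E
      * (↑((lowerU (-(E.c * a')) : (FM R s)ˣ)⁻¹) : FM R s)) ≠ 1 := by
    intro h
    apply hE1
    have h7 := (aux_conj_cancel (lowerU (-(E.c * a')) : (FM R s)ˣ) E).symm
    rw [h, mul_one] at h7
    rw [h7, Units.inv_mul]
  obtain ⟨U, hU⟩ := idem_a_one hs hFidem hFa hF1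
  refine ⟨U * lowerU (-(E.c * a')), ?_⟩
  rw [mul_inv_rev, Units.val_mul, Units.val_mul]
  calc ((↑U : FM R s) * ↑(lowerU (-(E.c * a')) : (FM R s)ˣ)) * E
        * ((↑((lowerU (-(E.c * a')) : (FM R s)ˣ)⁻¹) : FM R s) * ↑(U⁻¹))
      = (↑U : FM R s) * ((↑(lowerU (-(E.c * a')) : (FM R s)ˣ) : FM R s) * E
          * (↑((lowerU (-(E.c * a')) : (FM R s)ˣ)⁻¹) : FM R s)) * (↑(U⁻¹) : FM R s) := by
        simp [mul_assoc]
  _ = FM.mk 1 0 0 0 := hU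

lemma idem_classify {E : FM R s} (hs : IsUnit s) (hE : E * E = E) (hE0 : E ≠ 0)
    (hE1 : E ≠ 1) :
    ∃ u : (FM R s)ˣ, (↑(u⁻¹) : FM R s) * E * ↑u = (FM.mk 1 0 0 0 : FM R s) := by
  by_cases hua : IsUnit E.a
  · obtain ⟨U, hU⟩ := idem_aunit hs hE hua hE1
    exact ⟨U⁻¹, by rw [inv_inv]; exact hU⟩
  by_cases hud : IsUnit E.d
  · have hcen : ∀ r : R, s * r = r * s := Fact.out
    have hss : ∀ r : R, s * s * r = r * (s * s) := by
      intro r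
      rw [mul_assoc, hcen r, ← mul_assoc, hcen r, mul_assoc]
    have hss2 : s * s * ((↑hs.unit⁻¹ : R) * ↑hs.unit⁻¹) = 1 := by
      rw [mul_assoc s s, ← mul_assoc s (↑hs.unit⁻¹ : R), hs.mul_val_inv, one_mul,
        hs.mul_val_inv]
    have hE'idem : ((↑(swapU hs : (FM R s)ˣ) : FM R s) * E
          * (↑((swapU hs : (FM R s)ˣ)⁻¹) : FM R s))
        * ((↑(swapU hs : (FM R s)ˣ) : FM R s) * E
          * (↑((swapU hs : (FM R s)ˣ)⁻¹) : FM R s))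
        = (↑(swapU hs : (FM R s)ˣ) : FM R s) * E
          * (↑((swapU hs : (FM R s)ˣ)⁻¹) : FM R s) := aux_conj_idem hE _
    have hE'a : ((↑(swapU hs : (FM R s)ˣ) : FM R s) * E
        * (↑((swapU hs : (FM R s)ˣ)⁻¹) : FM R s)).a = E.d := by
      show (0 * E.a + s * s * (1 * E.c)) * 0
          + s * s * ((0 * E.b + 1 * E.d) * ((↑hs.unit⁻¹ : R) * ↑hs.unit⁻¹)) = E.d
      simp only [one_mul, mul_one, zero_mul, mul_zero, add_zero, zero_add]
      rw [← mul_assoc, hss E.d, mul_assoc, hss2, mul_one]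
    have hE'1 : ((↑(swapU hs : (FM R s)ˣ) : FM R s) * E
        * (↑((swapU hs : (FM R s)ˣ)⁻¹) : FM R s)) ≠ 1 := by
      intro h
      apply hE1
      have h7 := (aux_conj_cancel (swapU hs : (FM R s)ˣ) E).symm
      rw [h, mul_one] at h7
      rw [h7, Units.inv_mul]
    obtain ⟨U, hU⟩ := idem_aunit hs hE'idem (hE'a ▸ hud) hE'1
    refine ⟨(U * swapU hs)⁻¹, ?_⟩
    rw [inv_inv, mul_inv_rev, Units.val_mul, Units.val_mul]
    calc ((↑U : FM R s) * ↑(swapU hs : (FM R s)ˣ)) * E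
          * ((↑((swapU hs : (FM R s)ˣ)⁻¹) : FM R s) * ↑(U⁻¹))
        = (↑U : FM R s) * ((↑(swapU hs : (FM R s)ˣ) : FM R s) * E
            * (↑((swapU hs : (FM R s)ˣ)⁻¹) : FM R s)) * (↑(U⁻¹) : FM R s) := by
          simp [mul_assoc]
    _ = FM.mk 1 0 0 0 := hU
  · exfalso
    apply hE0
    have haJ : E.a ∈ (⊥ : Ideal R).jacobson := aux_mem_jac_of_not_isUnit hua
    have hdJ : E.d ∈ (⊥ : Ideal R).jacobson := aux_mem_jac_of_not_isUnit hud
    have r2 : E.a * E.b + E.b * E.d = E.b := congrArg FM.b hE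
    have r3 : E.c * E.a + E.d * E.c = E.c := congrArg FM.c hE
    have hbJ : E.b ∈ (⊥ : Ideal R).jacobson := by
      have hu := aux_isUnit_one_sub hdJ
      obtain ⟨v, hv1, hv2⟩ : ∃ v, (1 - E.d) * v = 1 ∧ v * (1 - E.d) = 1 :=
        ⟨↑hu.unit⁻¹, hu.mul_val_inv, hu.val_inv_mul⟩
      have h1 : E.b * (1 - E.d) = E.a * E.b := by
        rw [mul_sub, mul_one]
        exact (eq_sub_of_add_eq r2).symm
      have h2 : E.b = E.a * (E.b * v) := by
        calc E.b = E.b * ((1 - E.d) * v) := by rw [hv1, mul_one]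
        _ = (E.b * (1 - E.d)) * v := (mul_assoc _ _ _).symm
        _ = (E.a * E.b) * v := by rw [h1]
        _ = E.a * (E.b * v) := mul_assoc _ _ _
      rw [h2]
      exact aux_jac_mul_right haJ _
    have hcJ : E.c ∈ (⊥ : Ideal R).jacobson := by
      have hu := aux_isUnit_one_sub haJ
      obtain ⟨v, hv1, hv2⟩ : ∃ v, (1 - E.a) * v = 1 ∧ v * (1 - E.a) = 1 :=
        ⟨↑hu.unit⁻¹, hu.mul_val_inv, hu.val_inv_mul⟩
      have h1 : E.c * (1 - E.a) = E.d * E.c := by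
        rw [mul_sub, mul_one]
        exact (eq_sub_of_add_eq' r3).symm
      have h2 : E.c = E.d * (E.c * v) := by
        calc E.c = E.c * ((1 - E.a) * v) := by rw [hv1, mul_one]
        _ = (E.c * (1 - E.a)) * v := (mul_assoc _ _ _).symm
        _ = (E.d * E.c) * v := by rw [h1]
        _ = E.d * (E.c * v) := mul_assoc _ _ _
      rw [h2]
      exact aux_jac_mul_right hdJ _
    exact aux_idem_jac_eq_zero hE (mem_jac_of_entries haJ hbJ hcJ hdJ)

end FM

end FMAux2

theorem stmt12 {R : Type*} [Ring R] [IsLocalRing R] (s : R)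
    [Fact (∀ x : R, s * x = x * s)] (hs : IsUnit s) (A : FM R s) :
    IsStronglyJClean A ↔
      A ∈ (⊥ : Ideal (FM R s)).jacobson ∨ 1 - A ∈ (⊥ : Ideal (FM R s)).jacobson ∨
        ∃ v w : R, v - 1 ∈ (⊥ : Ideal R).jacobson ∧ w ∈ (⊥ : Ideal R).jacobson ∧
          ∃ u : (FM R s)ˣ, ((u⁻¹ : (FM R s)ˣ) : FM R s) * A * (u : FM R s) = FM.mk v 0 0 w := by
  constructor
  · rintro ⟨E, hEi, hcomm, hmem⟩
    have hEi' : E * E = E := hEi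
    by_cases hE0 : E = 0
    · left; rwa [hE0, sub_zero] at hmem
    by_cases hE1 : E = 1
    · right; left
      rw [hE1] at hmem
      have h2 := neg_mem hmem
      rwa [neg_sub] at h2
    · right; right
      obtain ⟨u, hu⟩ := FM.idem_classify hs hEi' hE0 hE1
      have hWE : (A - E) * E = E * (A - E) := by
        rw [sub_mul, mul_sub, hcomm, hEi']
      have hW'mem : (↑(u⁻¹) : FM R s) * (A - E) * ↑u ∈ (⊥ : Ideal (FM R s)).jacobson := by
        have h1 := aux_jac_mul_right hmem (↑u : FM R s)
        have h2 := Ideal.mul_mem_left _ ((↑(u⁻¹) : FM R s)) h1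
        rwa [← mul_assoc] at h2
      set W' : FM R s := (↑(u⁻¹) : FM R s) * (A - E) * ↑u with hW'
      have hW'comm : W' * FM.mk 1 0 0 0 = FM.mk 1 0 0 0 * W' := by
        rw [← hu, hW', aux_conj_mul', aux_conj_mul', hWE]
      have hb0 : W'.b = 0 := by
        have h := congrArg FM.b hW'comm
        simpa using h.symm
      have hc0 : W'.c = 0 := by
        have h := congrArg FM.c hW'comm
        simpa using h
      refine ⟨1 + W'.a, W'.d, ?_, FM.d_mem_of_mem_jac hW'mem, u, ?_⟩
      · have h3 := FM.a_mem_of_mem_jac hW'mem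
        simpa using h3
      · calc (↑(u⁻¹) : FM R s) * A * ↑u
            = (↑(u⁻¹) : FM R s) * E * ↑u + W' := by rw [hW']; noncomm_ring
        _ = FM.mk 1 0 0 0 + W' := by rw [hu]
        _ = FM.mk (1 + W'.a) 0 0 W'.d := by
            ext <;> simp [hb0, hc0]
  · rintro (h | h | ⟨v, w, hv, hw, u, hu⟩)
    · exact ⟨0, by simp [IsIdempotentElem], by rw [mul_zero, zero_mul],
        by rwa [sub_zero]⟩
    · refine ⟨1, by simp [IsIdempotentElem], by rw [mul_one, one_mul], ?_⟩
      have h2 := neg_mem h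
      rwa [neg_sub] at h2
    · have hA : A = (↑u : FM R s) * FM.mk v 0 0 w * (↑(u⁻¹) : FM R s) := by
        have h1 : A = (↑u : FM R s) * ((↑(u⁻¹) : FM R s) * A * ↑u) * (↑(u⁻¹) : FM R s) := by
          simp [mul_assoc]
        rw [hu] at h1
        exact h1
      have he1 : (FM.mk 1 0 0 0 : FM R s) * FM.mk 1 0 0 0 = FM.mk 1 0 0 0 := by
        ext <;> simp
      refine ⟨(↑u : FM R s) * FM.mk 1 0 0 0 * (↑(u⁻¹) : FM R s), aux_conj_idem he1 u, ?_, ?_⟩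
      · rw [hA, aux_conj_mul, aux_conj_mul]
        have hDe : (FM.mk v 0 0 w : FM R s) * FM.mk 1 0 0 0
            = FM.mk 1 0 0 0 * FM.mk v 0 0 w := by ext <;> simp
        rw [hDe]
      · rw [hA]
        have h1 : (↑u : FM R s) * FM.mk v 0 0 w * (↑(u⁻¹) : FM R s)
              - (↑u : FM R s) * FM.mk 1 0 0 0 * (↑(u⁻¹) : FM R s)
            = (↑u : FM R s) * ((FM.mk v 0 0 w : FM R s) - FM.mk 1 0 0 0)
              * (↑(u⁻¹) : FM R s) := by
          noncomm_ring
        rw [h1]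
        refine aux_jac_conj ?_ u
        apply FM.mem_jac_of_entries
        · simpa using hv
        · simp
        · simp
        · simpa using hw
end

section
/- Let R be a commutative local ring and s a unit of R. Then the formal matrix ring M₂(R;s) is not strongly J-clean; specifically, the matrix [[1,1],[1,0]] is not strongly J-clean in M₂(R;s). -/
theorem stmt13 {R : Type*} [CommRing R] [IsLocalRing R] (s : R) (hs : IsUnit s) :
    (¬ ∀ A : FM R s, IsStronglyJClean A) ∧
      ¬ IsStronglyJClean (FM.mk (1 : R) 1 1 0 : FM R s) := by
  suffices h : ¬ IsStronglyJClean (FM.mk (1 : R) 1 1 0 : FM R s) by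
    exact ⟨fun hall => h (hall _), h⟩
  rintro ⟨e, he, hcomm, hJ⟩
  set x : FM R s := FM.mk (1 : R) 1 1 0 with hx
  set j : FM R s := x - e with hjdef
  have hje : j * e = e * j := by
    simp only [hjdef, sub_mul, mul_sub, hcomm]
  have key : x * (x - 1) = (e + j - 1 + e) * j := by
    have hxe : x = e + j := by simp [hjdef]
    have hee : e * e = e := he
    calc x * (x - 1) = x * x - x := by noncomm_ring
      _ = (e + j) * (e + j) - (e + j) := by rw [← hxe]
      _ = e * e + e * j + j * e + j * j - e - j := by noncomm_ring
      _ = e * e + e * j + e * j + j * j - e - j := by rw [hje]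
      _ = (e + j - 1 + e) * j + (e * e - e) := by noncomm_ring
      _ = (e + j - 1 + e) * j := by rw [hee]; noncomm_ring
  have hmem : x * (x - 1) ∈ (⊥ : Ideal (FM R s)).jacobson := by
    rw [key]
    simpa [smul_eq_mul] using
      Submodule.smul_mem ((⊥ : Ideal (FM R s)).jacobson) (e + j - 1 + e) hJ
  -- compute x * (x - 1) explicitly
  have hcomp : x * (x - 1) = FM.mk (s * s) 0 0 (s * s) := by
    ext <;> simp [hx, sub_eq_add_neg] <;> ring
  have hunit : IsUnit (x * (x - 1)) := by
    obtain ⟨u, hu⟩ := hs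
    set t : R := ((u⁻¹ : Rˣ) : R) * ((u⁻¹ : Rˣ) : R) with ht
    have hst : s * s * t = 1 := by
      rw [ht, ← hu, show (u : R) * (u : R) * (((u⁻¹ : Rˣ) : R) * ((u⁻¹ : Rˣ) : R))
            = ((u : R) * ((u⁻¹ : Rˣ) : R)) * ((u : R) * ((u⁻¹ : Rˣ) : R)) by ring]
      simp
    have hts : t * (s * s) = 1 := by rw [mul_comm]; exact hst
    refine ⟨⟨x * (x - 1), FM.mk t 0 0 t, ?_, ?_⟩, rfl⟩ <;>
      rw [hcomp] <;> ext <;> simp [hst, hts]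
  have htop : ((⊥ : Ideal (FM R s)).jacobson : Ideal (FM R s)) = ⊤ :=
    Ideal.eq_top_of_isUnit_mem _ hmem hunit
  have hbot : (⊥ : Ideal (FM R s)) = ⊤ := Ideal.jacobson_eq_top_iff.mp htop
  have h10 : (1 : FM R s) = 0 := by
    have : (1 : FM R s) ∈ (⊥ : Ideal (FM R s)) := hbot ▸ Submodule.mem_top
    simpa using this
  have : (1 : R) = 0 := congrArg FM.a h10
  exact one_ne_zero this
end

section
/- Let R be a commutative ring with s ∈ R. For matrices A, B ∈ M₂(R;s), define det_s([[a,b],[c,d]]) = ad - s²bc. Then det_s(AB) = det_s(A)·det_s(B); moreover, A is a unit of M₂(R;s) if and only if det_s(A) is a unit of R, and in that case A⁻¹ = det_s(A)⁻¹·[[d,-b],[-c,a]]. -/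
/-- The `s`-determinant of a formal matrix. -/
def FM.dets {R : Type*} [CommRing R] {s : R} (A : FM R s) : R :=
  A.a * A.d - s * s * (A.b * A.c)

theorem stmt16 {R : Type*} [CommRing R] (s : R) :
    (∀ A B : FM R s, (A * B).dets = A.dets * B.dets) ∧
    (∀ A : FM R s, IsUnit A ↔ IsUnit A.dets) ∧
    (∀ A : FM R s, IsUnit A →
      Ring.inverse A = FM.mk (Ring.inverse A.dets * A.d) (Ring.inverse A.dets * -A.b)
        (Ring.inverse A.dets * -A.c) (Ring.inverse A.dets * A.a)) := by
  have hmul : ∀ A B : FM R s, (A * B).dets = A.dets * B.dets := by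
    intro A B
    simp only [FM.dets, FM.mul_a, FM.mul_b, FM.mul_c, FM.mul_d]
    ring
  have key : ∀ A : FM R s, IsUnit A.dets →
      A * FM.mk (Ring.inverse A.dets * A.d) (Ring.inverse A.dets * -A.b)
        (Ring.inverse A.dets * -A.c) (Ring.inverse A.dets * A.a) = 1 ∧
      FM.mk (Ring.inverse A.dets * A.d) (Ring.inverse A.dets * -A.b)
        (Ring.inverse A.dets * -A.c) (Ring.inverse A.dets * A.a) * A = 1 := by
    intro A h
    have hi : A.dets * Ring.inverse A.dets = 1 := Ring.mul_inverse_cancel _ h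
    set x := Ring.inverse A.dets with hx
    simp only [FM.dets] at hi
    constructor <;> ext <;>
      simp only [FM.mul_a, FM.mul_b, FM.mul_c, FM.mul_d, FM.one_a, FM.one_b, FM.one_c,
        FM.one_d] <;>
      first
        | ring1
        | linear_combination hi
  have hdet : ∀ A : FM R s, IsUnit A → IsUnit A.dets := by
    intro A hA
    obtain ⟨u, rfl⟩ := hA
    have h1 : ((u : FM R s) * ↑u⁻¹).dets = 1 := by rw [u.mul_inv]; simp [FM.dets]
    rw [hmul] at h1
    exact IsUnit.of_mul_eq_one _ h1
  refine ⟨hmul, fun A => ⟨hdet A, fun h => ?_⟩, fun A hA => ?_⟩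
  · obtain ⟨h1, h2⟩ := key A h
    exact ⟨⟨A, _, h1, h2⟩, rfl⟩
  · obtain ⟨h1, h2⟩ := key A (hdet A hA)
    obtain ⟨u, rfl⟩ := hA
    rw [Ring.inverse_unit]
    exact Units.inv_eq_of_mul_eq_one_right h1
end

section
/- Let R be a commutative ring with s ∈ R and let A ∈ M₂(R;s) with A ∉ J(M₂(R;s)). If det_s(A) ∈ J(R) and tr(A) ∈ J(R), then A is not strongly J-clean in M₂(R;s). -/
section Aux

variable {R : Type*} [CommRing R] {s : R}

/-- If the `s`-determinant of a formal matrix has a left inverse, the matrix has a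
left inverse (via the adjugate). -/
@[simp] lemma FM.sub_a_s17 (x y : FM R s) : (x - y).a = x.a - y.a := by
  rw [sub_eq_add_neg, sub_eq_add_neg]; simp
@[simp] lemma FM.sub_b_s17 (x y : FM R s) : (x - y).b = x.b - y.b := by
  rw [sub_eq_add_neg, sub_eq_add_neg]; simp
@[simp] lemma FM.sub_c_s17 (x y : FM R s) : (x - y).c = x.c - y.c := by
  rw [sub_eq_add_neg, sub_eq_add_neg]; simp
@[simp] lemma FM.sub_d_s17 (x y : FM R s) : (x - y).d = x.d - y.d := by
  rw [sub_eq_add_neg, sub_eq_add_neg]; simp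

lemma FM.exists_left_inv_of_dets {M : FM R s} (h : IsUnit M.dets) :
    ∃ Z : FM R s, Z * M = 1 := by
  obtain ⟨v, hv⟩ := h.exists_left_inv
  have hv' : v * M.a * M.d - v * (s * s) * (M.b * M.c) = 1 := by
    unfold FM.dets at hv; linear_combination hv
  refine ⟨⟨v * M.d, -(v * M.b), -(v * M.c), v * M.a⟩, ?_⟩
  ext
  case a => simp only [FM.mul_a, FM.one_a]; linear_combination hv'
  case b => simp only [FM.mul_b, FM.one_b]; ring
  case c => simp only [FM.mul_c, FM.one_c]; ring
  case d => simp only [FM.mul_d, FM.one_d]; linear_combination hv'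

/-- Scalar matrices with entries in the Jacobson radical of `R` lie in the Jacobson
radical of `FM R s`. -/
lemma FM.scalar_mem_jacobson {t : R} (ht : t ∈ (⊥ : Ideal R).jacobson) :
    (⟨t, 0, 0, t⟩ : FM R s) ∈ (⊥ : Ideal (FM R s)).jacobson := by
  rw [Ideal.mem_jacobson_iff]
  intro Y
  set M : FM R s := Y * ⟨t, 0, 0, t⟩ + 1 with hM
  have hdets : IsUnit M.dets := by
    have := Ideal.mem_jacobson_bot.1 ht (Y.a * Y.d * t + Y.a + Y.d - s * s * (Y.b * Y.c * t))
    convert this using 1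
    simp only [hM, FM.dets, FM.add_a, FM.add_b, FM.add_c, FM.add_d, FM.mul_a, FM.mul_b,
      FM.mul_c, FM.mul_d, FM.one_a, FM.one_b, FM.one_c, FM.one_d]
    ring
  obtain ⟨Z, hZ⟩ := FM.exists_left_inv_of_dets hdets
  refine ⟨Z, ?_⟩
  have : Z * Y * ⟨t, 0, 0, t⟩ + Z - 1 = Z * M - 1 := by
    rw [hM, mul_add, mul_one, mul_assoc]
  rw [this, hZ, sub_self]
  exact Submodule.zero_mem _

/-- Cayley–Hamilton for `FM R s`. -/
lemma FM.cayley_hamilton (A : FM R s) :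
    A * A = A * ⟨A.a + A.d, 0, 0, A.a + A.d⟩ - ⟨A.dets, 0, 0, A.dets⟩ := by
  ext
  case a => simp only [FM.mul_a, FM.sub_a_s17, FM.dets]; ring
  case b => simp only [FM.mul_b, FM.sub_b_s17, FM.dets]; ring
  case c => simp only [FM.mul_c, FM.sub_c_s17, FM.dets]; ring
  case d => simp only [FM.mul_d, FM.sub_d_s17, FM.dets]; ring

end Aux

theorem stmt17 {R : Type*} [CommRing R] (s : R) (A : FM R s)
    (hA : A ∉ (⊥ : Ideal (FM R s)).jacobson)
    (hdet : A.dets ∈ (⊥ : Ideal R).jacobson)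
    (htr : A.a + A.d ∈ (⊥ : Ideal R).jacobson) :
    ¬ IsStronglyJClean A := by
  rintro ⟨E, hE, hcomm, hW⟩
  set J := (⊥ : Ideal (FM R s)).jacobson with hJ
  -- A² ∈ J
  have hsq : A * A ∈ J := by
    rw [FM.cayley_hamilton A]
    exact Submodule.sub_mem _ (Ideal.mul_mem_left _ _ (FM.scalar_mem_jacobson htr))
      (FM.scalar_mem_jacobson hdet)
  -- E ∈ J
  have hEJ : E ∈ J := by
    have key : E = A * A - (A * (A - E) + E * (A - E)) := by
      have hE2 : E * E = E := hE
      rw [mul_sub, mul_sub, hE2]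
      rw [show E * A = A * E from hcomm.symm]
      abel
    rw [key]
    exact Submodule.sub_mem _ hsq
      (Submodule.add_mem _ (Ideal.mul_mem_left _ _ hW) (Ideal.mul_mem_left _ _ hW))
  -- E = 0
  have hE0 : E = 0 := by
    obtain ⟨z, hz⟩ := Ideal.mem_jacobson_iff.1 hEJ (-1)
    rw [Ideal.mem_bot] at hz
    have hz1 : z * (1 - E) = 1 := by
      have h' : z * (1 - E) - 1 = z * -1 * E + z - 1 := by noncomm_ring
      rw [hz] at h'
      exact sub_eq_zero.mp h'
    have : E = z * (E - E * E) := by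
      calc E = 1 * E := (one_mul E).symm
        _ = (z * (1 - E)) * E := by rw [hz1]
        _ = z * (E - E * E) := by noncomm_ring
    rw [hE.eq, sub_self, mul_zero] at this
    exact this
  exact hA (by simpa [hE0] using hW)
end
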